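/- arXiv:math/0005022 — 3 statements merged into one kernel-verified Lean document; each statement's English description precedes it below -/
import Mathlib

section
/- Let μ be an element of M (a minimal nonzero dominant element of X∨) and suppose there exists a root γ ∈ R with ⟨γ, μ⟩ ≥ 2. Then μ = γ∨, and γ is the unique root of R with ⟨γ, μ⟩ ≥ 2. -/
open scoped BigOperators Classical

noncomputable section

/-- Data of a finite crystallographic root system in a pair of vector spaces `V`, `V'`
(in perfect duality via `pair`), with a chosen base `Δ` and a cocharacter lattice `X`. -/
structure RootSystemData (V V' : Type) [AddCommGroup V] [Module ℝ V]
    [FiniteDimensional ℝ V] [AddCommGroup V'] [Module ℝ V'] [FiniteDimensional ℝ V'] where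
  /-- The canonical pairing between `V` and `V'`. -/
  pair : V →ₗ[ℝ] V' →ₗ[ℝ] ℝ
  /-- The (finite) set of roots. -/
  R : Finset V
  /-- The coroot attached to a root. -/
  coroot : V → V'
  root_ne_zero : ∀ α ∈ R, α ≠ (0 : V)
  neg_mem : ∀ α ∈ R, -α ∈ R
  coroot_neg : ∀ α ∈ R, coroot (-α) = -coroot α
  pair_self_eq_two : ∀ α ∈ R, pair α (coroot α) = 2
  crystallographic : ∀ α ∈ R, ∀ β ∈ R, ∃ n : ℤ, pair α (coroot β) = (n : ℝ)
  reflect_root_mem : ∀ α ∈ R, ∀ β ∈ R, β - pair β (coroot α) • α ∈ R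
  reflect_coroot_mem : ∀ α ∈ R, ∀ β ∈ R,
    coroot β - pair α (coroot β) • coroot α ∈ coroot '' R
  /-- The chosen base (set of simple roots). -/
  Δ : Finset V
  base_subset : Δ ⊆ R
  base_indep : LinearIndependent ℝ (fun a : (Δ : Set V) => (a : V))
  base_generates : ∀ α ∈ R,
    α ∈ AddSubmonoid.closure (Δ : Set V) ∨ -α ∈ AddSubmonoid.closure (Δ : Set V)
  /-- The lattice `X∨`. -/
  X : AddSubgroup V'
  coroot_mem_X : ∀ α ∈ R, coroot α ∈ X
  X_le_span : (X : Set V') ⊆ (Submodule.span ℝ (coroot '' (R : Set V)) : Set V')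
  pair_X_int : ∀ α ∈ R, ∀ x ∈ X, ∃ n : ℤ, pair α x = (n : ℝ)

namespace RootSystemData

variable {V V' : Type} [AddCommGroup V] [Module ℝ V] [FiniteDimensional ℝ V]
  [AddCommGroup V'] [Module ℝ V'] [FiniteDimensional ℝ V']
  (D : RootSystemData V V')

/-- The set `R₊` of positive roots: roots which are `ℕ`-linear combinations of the base. -/
def Rpos : Finset V := D.R.filter fun α => α ∈ AddSubmonoid.closure (D.Δ : Set V)

/-- The coroot lattice `Q∨`. -/
def Qc : AddSubgroup V' := AddSubgroup.closure (D.coroot '' (D.R : Set V))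

/-- The positive cone `Q∨₊` generated by the coroots of the positive roots. -/
def Qpos : AddSubmonoid V' := AddSubmonoid.closure (D.coroot '' (D.Rpos : Set V))

/-- The dominance order: `ν ≤ λ` iff `λ - ν ∈ Q∨₊`. -/
def leQ (ν lam : V') : Prop := lam - ν ∈ D.Qpos

/-- Dominance: `ν` is dominant iff `⟨α, ν⟩ ≥ 0` for every positive root `α`. -/
def Dominant (ν : V') : Prop := ∀ α ∈ D.Rpos, 0 ≤ D.pair α ν

/-- The set `X∨₊` of dominant elements of the lattice. -/
def Xplus : Set V' := {x | x ∈ D.X ∧ D.Dominant x}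

/-- The set `M` of minimal elements of `X∨₊ \ {0}` for the dominance order. -/
def MSet : Set V' :=
  {μ | μ ∈ D.Xplus ∧ μ ≠ 0 ∧ ∀ ν ∈ D.Xplus, ν ≠ 0 → D.leQ ν μ → ν = μ}

/-- The reflection on `V` attached to a root `α`. -/
def reflV (α : V) (hα : α ∈ D.R) : V ≃ₗ[ℝ] V :=
  Module.reflection (show D.pair.flip (D.coroot α) α = 2 from D.pair_self_eq_two α hα)

/-- The reflection on `V'` attached to a root `α`. -/
def reflV' (α : V) (hα : α ∈ D.R) : V' ≃ₗ[ℝ] V' :=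
  Module.reflection (show D.pair α (D.coroot α) = 2 from D.pair_self_eq_two α hα)

/-- The Weyl group `W`, acting simultaneously on `V` (first component)
and on `V'` (second component); it is generated by the pairs of reflections
attached to the roots. -/
def weyl : Subgroup ((V ≃ₗ[ℝ] V) × (V' ≃ₗ[ℝ] V')) :=
  Subgroup.closure {g | ∃ α, ∃ hα : α ∈ D.R, g = (D.reflV α hα, D.reflV' α hα)}

/-- The orbit `Wμ` of `μ ∈ V'` under the Weyl group. -/
def Worbit (μ : V') : Set V' := {ν | ∃ g ∈ D.weyl, ν = g.2 μ}

/-- The set `Ω(λ) = {ν ∈ X∨ : wν ≤ λ for all w ∈ W}`. -/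
def Omega (lam : V') : Set V' :=
  {ν | ν ∈ D.X ∧ ∀ g ∈ D.weyl, D.leQ (g.2 ν) lam}

/-- Two roots are linked when they are non-orthogonal. -/
def Linked (α β : V) : Prop := α ∈ D.R ∧ β ∈ D.R ∧ D.pair α (D.coroot β) ≠ 0

/-- Two roots lie in the same irreducible component iff they are connected by a
chain of non-orthogonal roots. -/
def SameComponent (α β : V) : Prop := Relation.EqvGen D.Linked α β

/-- The half-sum `ρ` of the positive roots. -/
def rho : V := (2 : ℝ)⁻¹ • ∑ α ∈ D.Rpos, α

/-- A `W`-invariant inner product on `V'`. -/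
structure WInvInner where
  form : V' →ₗ[ℝ] V' →ₗ[ℝ] ℝ
  symm : ∀ x y, form x y = form y x
  posdef : ∀ x, x ≠ 0 → 0 < form x x
  invariant : ∀ g ∈ D.weyl, ∀ x y, form (g.2 x) (g.2 y) = form x y

/-- `β` is a root whose coroot is short: for every `W`-invariant inner product `B` on `V'`,
`B(β∨, β∨) ≤ B(α∨, α∨)` for every root `α` in the same irreducible component as `β`. -/
def IsShortCoroot (β : V) : Prop :=
  β ∈ D.R ∧ ∀ B : D.WInvInner, ∀ α ∈ D.R, D.SameComponent α β →
    B.form (D.coroot β) (D.coroot β) ≤ B.form (D.coroot α) (D.coroot α)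

end RootSystemData

namespace QMAux

variable {V V' : Type} [AddCommGroup V] [Module ℝ V] [FiniteDimensional ℝ V]
  [AddCommGroup V'] [Module ℝ V'] [FiniteDimensional ℝ V']

/-- Two roots with `⟨b,a∨⟩ = 0` but `⟨a,b∨⟩ ≠ 0` generate infinitely many roots. -/
lemma chain0 (D : RootSystemData V V') (a b : V) (ha : a ∈ D.R) (hb : b ∈ D.R)
    (h0 : D.pair b (D.coroot a) = 0) (hp : D.pair a (D.coroot b) ≠ 0) : False := by
  have hb2 : D.pair b (D.coroot b) = 2 := D.pair_self_eq_two b hb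
  have ha2 : D.pair a (D.coroot a) = 2 := D.pair_self_eq_two a ha
  set p : ℝ := D.pair a (D.coroot b) with hpdef
  have hmem : ∀ k : ℕ, a + (((k : ℝ)) * p) • b ∈ D.R := by
    intro k
    induction k with
    | zero => simpa using ha
    | succ k ih =>
      have h1 := D.reflect_root_mem b hb _ ih
      have e1 : D.pair (a + ((k : ℝ) * p) • b) (D.coroot b) = (2 * (k : ℝ) + 1) * p := by
        simp only [map_add, map_smul, LinearMap.add_apply, LinearMap.smul_apply,
          smul_eq_mul, hb2, ← hpdef]
        ring
      rw [e1] at h1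
      have e2 : a + ((k : ℝ) * p) • b - ((2 * (k : ℝ) + 1) * p) • b
          = a + (-(((k : ℝ) + 1) * p)) • b := by module
      rw [e2] at h1
      have h2 := D.reflect_root_mem a ha _ h1
      have e3 : D.pair (a + (-(((k : ℝ) + 1) * p)) • b) (D.coroot a) = 2 := by
        simp only [map_add, map_smul, LinearMap.add_apply, LinearMap.smul_apply,
          smul_eq_mul, ha2, h0]
        ring
      rw [e3] at h2
      have h3 := D.neg_mem _ h2
      have e4 : -(a + (-(((k : ℝ) + 1) * p)) • b - (2 : ℝ) • a)
          = a + (((k : ℝ) + 1) * p) • b := by module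
      rw [e4] at h3
      have e5 : ((k + 1 : ℕ) : ℝ) = (k : ℝ) + 1 := by push_cast; ring
      rw [e5]
      exact h3
  have hinj : Function.Injective (fun k : ℕ => a + ((k : ℝ) * p) • b) := by
    intro j k hjk
    simp only at hjk
    have h1 : ((j : ℝ) * p) • b = ((k : ℝ) * p) • b := add_left_cancel hjk
    have h2 : (((j : ℝ) - (k : ℝ)) * p) • b = 0 := by
      rw [sub_mul, sub_smul, h1, sub_self]
    rcases smul_eq_zero.mp h2 with h | h
    · rcases mul_eq_zero.mp h with h' | h'
      · exact_mod_cast sub_eq_zero.mp h'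
      · exact absurd h' hp
    · exact absurd h (D.root_ne_zero b hb)
  have hinf : (↑D.R : Set V).Infinite :=
    Set.infinite_of_injective_forall_mem hinj (fun k => Finset.mem_coe.mpr (hmem k))
  exact D.R.finite_toSet.not_infinite hinf

/-- Two distinct roots with `⟨a,b∨⟩ = ⟨b,a∨⟩ = 2` generate infinitely many roots. -/
lemma chain2 (D : RootSystemData V V') (a b : V) (ha : a ∈ D.R) (hb : b ∈ D.R)
    (hne : a ≠ b) (hab : D.pair a (D.coroot b) = 2) (hba : D.pair b (D.coroot a) = 2) :
    False := by
  have hb2 : D.pair b (D.coroot b) = 2 := D.pair_self_eq_two b hb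
  have ha2 : D.pair a (D.coroot a) = 2 := D.pair_self_eq_two a ha
  have hmem : ∀ k : ℕ, (2 * (k : ℝ) + 1) • a - (2 * (k : ℝ)) • b ∈ D.R := by
    intro k
    induction k with
    | zero => simpa using ha
    | succ k ih =>
      have h1 := D.reflect_root_mem b hb _ ih
      have e1 : D.pair ((2 * (k : ℝ) + 1) • a - (2 * (k : ℝ)) • b) (D.coroot b) = 2 := by
        simp only [map_sub, map_smul, LinearMap.sub_apply, LinearMap.smul_apply,
          smul_eq_mul, hb2, hab]
        ring
      rw [e1] at h1
      have e2 : (2 * (k : ℝ) + 1) • a - (2 * (k : ℝ)) • b - (2 : ℝ) • b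
          = (2 * (k : ℝ) + 1) • a - (2 * (k : ℝ) + 2) • b := by module
      rw [e2] at h1
      have h2 := D.reflect_root_mem a ha _ h1
      have e3 : D.pair ((2 * (k : ℝ) + 1) • a - (2 * (k : ℝ) + 2) • b) (D.coroot a)
          = -2 := by
        simp only [map_sub, map_smul, LinearMap.sub_apply, LinearMap.smul_apply,
          smul_eq_mul, ha2, hba]
        ring
      rw [e3] at h2
      have e4 : (2 * (k : ℝ) + 1) • a - (2 * (k : ℝ) + 2) • b - (-2 : ℝ) • a
          = (2 * ((k : ℝ) + 1) + 1) • a - (2 * ((k : ℝ) + 1)) • b := by module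
      rw [e4] at h2
      have e5 : ((k + 1 : ℕ) : ℝ) = (k : ℝ) + 1 := by push_cast; ring
      rw [e5]
      exact h2
  have hinj : Function.Injective
      (fun k : ℕ => (2 * (k : ℝ) + 1) • a - (2 * (k : ℝ)) • b) := by
    intro j k hjk
    simp only at hjk
    have h2 : (2 * ((j : ℝ) - (k : ℝ))) • (a - b) = 0 := by
      have := sub_eq_zero.mpr hjk
      rw [show (2 * (j : ℝ) + 1) • a - (2 * (j : ℝ)) • b -
          ((2 * (k : ℝ) + 1) • a - (2 * (k : ℝ)) • b)
          = (2 * ((j : ℝ) - (k : ℝ))) • (a - b) from by module] at this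
      exact this
    rcases smul_eq_zero.mp h2 with h | h
    · have : (j : ℝ) = (k : ℝ) := by linarith [sub_eq_zero.mp (by linarith : (j:ℝ) - (k:ℝ) = 0)]
      exact_mod_cast this
    · exact absurd (sub_eq_zero.mp h) hne
  have hinf : (↑D.R : Set V).Infinite :=
    Set.infinite_of_injective_forall_mem hinj (fun k => Finset.mem_coe.mpr (hmem k))
  exact D.R.finite_toSet.not_infinite hinf

/-- A linear functional positive on all positive roots. -/
lemma exists_height (D : RootSystemData V V') :
    ∃ L : V →ₗ[ℝ] ℝ, ∀ x ∈ D.Rpos, 0 < L x := by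
  have li : LinearIndepOn ℝ id (↑D.Δ : Set V) := D.base_indep
  let bb := Module.Basis.extend li
  let L : V →ₗ[ℝ] ℝ := bb.constr ℝ (fun i => if ((i : V) ∈ (↑D.Δ : Set V)) then (1 : ℝ) else 0)
  have hLΔ : ∀ x ∈ (↑D.Δ : Set V), L x = 1 := by
    intro x hx
    have hx' : x ∈ li.extend (Set.subset_univ _) := li.subset_extend _ hx
    have h1 : bb ⟨x, hx'⟩ = x := Module.Basis.extend_apply_self li ⟨x, hx'⟩
    have h2 := bb.constr_basis ℝ (fun i => if ((i : V) ∈ (↑D.Δ : Set V)) then (1 : ℝ) else 0) ⟨x, hx'⟩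
    rw [h1] at h2
    have h3 : L x = if x ∈ (↑D.Δ : Set V) then (1 : ℝ) else 0 := h2
    rw [h3, if_pos hx]
  have key : ∀ x ∈ AddSubmonoid.closure (↑D.Δ : Set V), 0 ≤ L x ∧ (L x = 0 → x = 0) := by
    intro x hx
    induction hx using AddSubmonoid.closure_induction with
    | mem y hy =>
      refine ⟨by rw [hLΔ y hy]; norm_num, fun h => ?_⟩
      rw [hLΔ y hy] at h; norm_num at h
    | zero => exact ⟨by simp, fun _ => rfl⟩
    | add y z hy hz ihy ihz =>
      refine ⟨by simpa using add_nonneg ihy.1 ihz.1, fun h => ?_⟩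
      rw [map_add] at h
      have hy0 : L y = 0 := le_antisymm (by linarith [ihz.1]) ihy.1
      have hz0 : L z = 0 := le_antisymm (by linarith [ihy.1]) ihz.1
      rw [ihy.2 hy0, ihz.2 hz0, add_zero]
  refine ⟨L, fun x hx => ?_⟩
  have hx' := Finset.mem_filter.mp hx
  have h1 := key x hx'.2
  rcases lt_or_eq_of_le h1.1 with h | h
  · exact h
  · exact absurd (h1.2 h.symm) (D.root_ne_zero x hx'.1)

end QMAux

theorem minimal_ge_two_unique {V V' : Type} [AddCommGroup V] [Module ℝ V] [FiniteDimensional ℝ V]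
    [AddCommGroup V'] [Module ℝ V'] [FiniteDimensional ℝ V']
    (D : RootSystemData V V')
    (μ : V') (hμ : μ ∈ D.MSet) (γ : V) (hγ : γ ∈ D.R)
    (h2 : 2 ≤ D.pair γ μ) :
    μ = D.coroot γ ∧ ∀ γ' ∈ D.R, 2 ≤ D.pair γ' μ → γ' = γ := by
  classical
  obtain ⟨⟨hμX, hμdom⟩, hμ0, hμmin⟩ := hμ
  obtain ⟨L, hL⟩ := QMAux.exists_height D
  have hRpos_sub : ∀ x ∈ D.Rpos, x ∈ D.R := fun x hx => (Finset.mem_filter.mp hx).1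
  -- positive pairing with μ forces positivity of the root
  have hF2 : ∀ x ∈ D.R, 0 < D.pair x μ → x ∈ D.Rpos := by
    intro x hx hpos
    rcases D.base_generates x hx with h | h
    · exact Finset.mem_filter.mpr ⟨hx, h⟩
    · exfalso
      have hnx : -x ∈ D.Rpos := Finset.mem_filter.mpr ⟨D.neg_mem x hx, h⟩
      have hd := hμdom (-x) hnx
      rw [map_neg, LinearMap.neg_apply] at hd
      linarith
  set S2 : Finset V := D.Rpos.filter (fun x => 2 ≤ D.pair x μ) with hS2def
  have hγpos : γ ∈ D.Rpos := hF2 γ hγ (by linarith)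
  have hγS2 : γ ∈ S2 := Finset.mem_filter.mpr ⟨hγpos, h2⟩
  obtain ⟨δ₁, hδ₁S2, hδ₁max⟩ := S2.exists_max_image (fun x => D.pair x μ) ⟨γ, hγS2⟩
  set S2' : Finset V := S2.filter (fun x => D.pair x μ = D.pair δ₁ μ) with hS2'def
  obtain ⟨δ, hδS2', hδmin⟩ := S2'.exists_min_image (fun x => L x)
    ⟨δ₁, Finset.mem_filter.mpr ⟨hδ₁S2, rfl⟩⟩
  have hδS2 : δ ∈ S2 := (Finset.mem_filter.mp hδS2').1
  have hδeqδ₁ : D.pair δ μ = D.pair δ₁ μ := (Finset.mem_filter.mp hδS2').2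
  have hδpos : δ ∈ D.Rpos := (Finset.mem_filter.mp hδS2).1
  have hδR : δ ∈ D.R := hRpos_sub δ hδpos
  have hδ2 : 2 ≤ D.pair δ μ := (Finset.mem_filter.mp hδS2).2
  have hmaxall : ∀ x ∈ S2, D.pair x μ ≤ D.pair δ μ := by
    intro x hx; rw [hδeqδ₁]; exact hδ₁max x hx
  -- A1 : μ - coroot δ is dominant
  have hA1 : D.Dominant (μ - D.coroot δ) := by
    by_contra hcon
    obtain ⟨β, hβpos, hβneg⟩ : ∃ β ∈ D.Rpos, D.pair β (μ - D.coroot δ) < 0 := by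
      by_contra h
      push_neg at h
      exact hcon (fun α hα => h α hα)
    have hβR : β ∈ D.R := hRpos_sub β hβpos
    have hb0 : 0 ≤ D.pair β μ := hμdom β hβpos
    obtain ⟨Bz, hBz⟩ := D.pair_X_int β hβR μ hμX
    obtain ⟨Kz, hKz⟩ := D.crystallographic β hβR δ hδR
    have hbk : D.pair β μ < D.pair β (D.coroot δ) := by
      have e : D.pair β (μ - D.coroot δ) = D.pair β μ - D.pair β (D.coroot δ) := by
        rw [map_sub]
      linarith [hβneg, e ▸ hβneg]
    have hBKz : Bz < Kz := by
      have : (Bz : ℝ) < (Kz : ℝ) := by rw [← hBz, ← hKz]; exact hbk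
      exact_mod_cast this
    have hBz0 : 0 ≤ Bz := by
      have : (0 : ℝ) ≤ (Bz : ℝ) := by rw [← hBz]; exact hb0
      exact_mod_cast this
    have hroot := D.reflect_root_mem δ hδR β hβR
    rw [hKz] at hroot
    have hεR : (Kz : ℝ) • δ - β ∈ D.R := by
      have h3 := D.neg_mem _ hroot
      rwa [show -(β - (Kz : ℝ) • δ) = (Kz : ℝ) • δ - β from by module] at h3
    have hεμ : D.pair ((Kz : ℝ) • δ - β) μ = (Kz : ℝ) * D.pair δ μ - D.pair β μ := by
      rw [map_sub, map_smul]
      simp [smul_eq_mul]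
    have hK1 : (1 : ℝ) ≤ (Kz : ℝ) := by
      have : (1 : ℤ) ≤ Kz := by omega
      exact_mod_cast this
    have hBle : (Bz : ℝ) ≤ (Kz : ℝ) - 1 := by
      have : Bz ≤ Kz - 1 := by omega
      have h' : (Bz : ℝ) ≤ ((Kz - 1 : ℤ) : ℝ) := by exact_mod_cast this
      push_cast at h'
      linarith
    have hKc : 1 * (D.pair δ μ - 1) ≤ (Kz : ℝ) * (D.pair δ μ - 1) :=
      mul_le_mul_of_nonneg_right hK1 (by linarith)
    have hexp : (Kz : ℝ) * (D.pair δ μ - 1) = (Kz : ℝ) * D.pair δ μ - (Kz : ℝ) := by ring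
    have hε2 : 2 ≤ D.pair ((Kz : ℝ) • δ - β) μ := by
      rw [hεμ, hBz]
      linarith [hKc, hexp, hδ2, hBle]
    have hεS2 : (Kz : ℝ) • δ - β ∈ S2 :=
      Finset.mem_filter.mpr ⟨hF2 _ hεR (by linarith), hε2⟩
    have hle := hmaxall _ hεS2
    rw [hεμ, hBz] at hle
    -- derive Kz = 1, Bz = 0
    have hKz1 : Kz = 1 ∧ Bz = 0 := by
      by_contra hne
      have h2K : 2 ≤ Kz ∨ (Kz = 1 ∧ 1 ≤ Bz) := by omega
      rcases h2K with h2K | ⟨hk1, hb1⟩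
      · have h2K' : (2 : ℝ) ≤ (Kz : ℝ) := by exact_mod_cast h2K
        nlinarith [hδ2, hBle, hle]
      · have : (Bz : ℝ) ≤ 0 := by
          have hb1' : (1:ℤ) ≤ Bz := hb1
          have hk1' : (Kz : ℝ) = 1 := by exact_mod_cast hk1
          nlinarith [hle, hk1', hδ2]
        have : Bz ≤ 0 := by exact_mod_cast this
        omega
    have hK1' : (Kz : ℝ) = 1 := by exact_mod_cast hKz1.1
    have hB0' : D.pair β μ = 0 := by rw [hBz, hKz1.2]; norm_num
    have hεδβ : (Kz : ℝ) • δ - β = δ - β := by rw [hK1', one_smul]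
    have hεeq : D.pair ((Kz : ℝ) • δ - β) μ = D.pair δ μ := by
      rw [hεμ, hK1', hB0']; ring
    have hεS2' : (Kz : ℝ) • δ - β ∈ S2' :=
      Finset.mem_filter.mpr ⟨hεS2, by rw [hεeq, hδeqδ₁]⟩
    have hmin := hδmin _ hεS2'
    have hLβ : 0 < L β := hL β hβpos
    rw [hεδβ, map_sub] at hmin
    linarith
  -- Qpos membership of coroots of positive roots
  have hQpos_coroot : ∀ x ∈ D.Rpos, D.coroot x ∈ D.Qpos := by
    intro x hx
    exact AddSubmonoid.subset_closure ⟨x, Finset.mem_coe.mpr hx, rfl⟩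
  -- A2 : μ = coroot δ
  have hμδ : μ = D.coroot δ := by
    by_contra hne
    have hν0 : μ - D.coroot δ ≠ 0 := sub_ne_zero.mpr (fun h => hne h)
    have hXν : μ - D.coroot δ ∈ D.X := AddSubgroup.sub_mem _ hμX (D.coroot_mem_X δ hδR)
    have hminν := hμmin (μ - D.coroot δ) ⟨hXν, hA1⟩ hν0 (by
      show μ - (μ - D.coroot δ) ∈ D.Qpos
      rw [sub_sub_cancel]
      exact hQpos_coroot δ hδpos)
    have hc0 : D.coroot δ = 0 := by
      have := sub_eq_self.mp hminν
      exact this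
    have h2' := D.pair_self_eq_two δ hδR
    rw [hc0, map_zero] at h2'
    norm_num at h2'
  have hc2 : D.pair δ μ = 2 := by rw [hμδ]; exact D.pair_self_eq_two δ hδR
  -- A3 : all roots pair at most 2 with μ
  have hA3 : ∀ x ∈ D.R, D.pair x μ ≤ 2 := by
    intro x hx
    by_contra hgt
    push_neg at hgt
    have hxS2 : x ∈ S2 := Finset.mem_filter.mpr ⟨hF2 x hx (by linarith), by linarith⟩
    have := hmaxall x hxS2
    linarith
  -- Phase B : S2 = {δ}
  have hS2single : ∀ x ∈ S2, x = δ := by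
    by_contra hcon
    push_neg at hcon
    obtain ⟨v₀, hv₀S2, hv₀ne⟩ := hcon
    set T : Finset V := S2.erase δ with hT
    obtain ⟨v, hvT, hvmax⟩ := T.exists_max_image (fun x => L x)
      ⟨v₀, Finset.mem_erase.mpr ⟨hv₀ne, hv₀S2⟩⟩
    have hvS2 : v ∈ S2 := (Finset.mem_erase.mp hvT).2
    have hvne : v ≠ δ := (Finset.mem_erase.mp hvT).1
    have hvpos : v ∈ D.Rpos := (Finset.mem_filter.mp hvS2).1
    have hvR : v ∈ D.R := hRpos_sub v hvpos
    have hv2 : D.pair v μ = 2 := le_antisymm (hA3 v hvR) (Finset.mem_filter.mp hvS2).2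
    have hvcδ : D.pair v (D.coroot δ) = 2 := by rw [← hμδ]; exact hv2
    -- d := pair δ (coroot v)
    obtain ⟨Dz, hDz⟩ := D.crystallographic δ hδR v hvR
    have hy := D.reflect_root_mem v hvR δ hδR
    have hyμ : D.pair (δ - D.pair δ (D.coroot v) • v) μ = 2 - 2 * (Dz : ℝ) := by
      rw [map_sub, map_smul]
      simp only [LinearMap.sub_apply, LinearMap.smul_apply, smul_eq_mul]
      rw [hc2, hv2, hDz]; ring
    have hub := hA3 _ hy
    have hlb := hA3 _ (D.neg_mem _ hy)
    rw [map_neg, LinearMap.neg_apply, hyμ] at hlb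
    rw [hyμ] at hub
    have hDz0 : (0 : ℤ) ≤ Dz := by
      have : (0 : ℝ) ≤ (Dz : ℝ) := by linarith
      exact_mod_cast this
    have hDz2' : Dz ≤ 2 := by
      have : (Dz : ℝ) ≤ 2 := by linarith
      exact_mod_cast this
    have hDne0 : Dz ≠ 0 := by
      intro h0
      refine QMAux.chain0 D v δ hvR hδR ?_ ?_
      · rw [hDz, h0]; norm_num
      · rw [hvcδ]; norm_num
    have hDne2 : Dz ≠ 2 := by
      intro h2'
      refine QMAux.chain2 D v δ hvR hδR hvne hvcδ ?_
      rw [hDz, h2']; norm_num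
    have hD1 : Dz = 1 := by omega
    have hd1 : D.pair δ (D.coroot v) = 1 := by rw [hDz, hD1]; norm_num
    -- the root w with coroot w = coroot v - μ
    have hπ := D.reflect_coroot_mem δ hδR v hvR
    rw [hd1, one_smul, ← hμδ] at hπ
    obtain ⟨w, hwmem, hwco⟩ := hπ
    have hwR : w ∈ D.R := Finset.mem_coe.mp hwmem
    have hwv : D.pair w (D.coroot v) = 2 + D.pair w μ := by
      have h2w := D.pair_self_eq_two w hwR
      rw [hwco, map_sub] at h2w
      linarith
    have hvw : D.pair v (D.coroot w) = 0 := by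
      rw [hwco, map_sub]
      have : D.pair v (D.coroot v) = 2 := D.pair_self_eq_two v hvR
      rw [this, hv2]; ring
    -- -w is a positive root
    have hwneg : -w ∈ D.Rpos := by
      rcases D.base_generates w hwR with h | h
      · exfalso
        have hwpos : w ∈ D.Rpos := Finset.mem_filter.mpr ⟨hwR, h⟩
        have hm0 : 0 ≤ D.pair w μ := hμdom w hwpos
        exact QMAux.chain0 D w v hwR hvR hvw (by rw [hwv]; linarith)
      · exact Finset.mem_filter.mpr ⟨D.neg_mem w hwR, h⟩
    -- coroot v is dominant
    have hvdom : D.Dominant (D.coroot v) := by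
      intro x hxpos
      by_contra hneg
      push_neg at hneg
      have hxR : x ∈ D.R := hRpos_sub x hxpos
      obtain ⟨Kz', hKz'⟩ := D.crystallographic x hxR v hvR
      have hKneg : Kz' ≤ -1 := by
        have : (Kz' : ℝ) < 0 := by rw [← hKz']; exact hneg
        have : Kz' < 0 := by exact_mod_cast this
        omega
      have hsx := D.reflect_root_mem v hvR x hxR
      have hsxμ : D.pair (x - D.pair x (D.coroot v) • v) μ
          = D.pair x μ - 2 * (Kz' : ℝ) := by
        rw [map_sub, map_smul]
        simp only [LinearMap.sub_apply, LinearMap.smul_apply, smul_eq_mul]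
        rw [hv2, hKz']; ring
      have hx0 : 0 ≤ D.pair x μ := hμdom x hxpos
      have hle2 := hA3 _ hsx
      rw [hsxμ] at hle2
      have hKm1 : (Kz' : ℝ) = -1 ∧ D.pair x μ = 0 := by
        have hK1 : Kz' = -1 := by
          have : (-2 : ℝ) * (Kz' : ℝ) ≤ 2 := by linarith
          have : (-1 : ℝ) ≤ (Kz' : ℝ) := by linarith
          have : (-1 : ℤ) ≤ Kz' := by exact_mod_cast this
          omega
        have hK1' : (Kz' : ℝ) = -1 := by exact_mod_cast hK1
        refine ⟨hK1', by linarith [hle2, hK1' ▸ hle2]⟩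
      have hsx' : x + v ∈ D.R := by
        rw [hKz', hKm1.1, show x - (-1 : ℝ) • v = x + v from by module] at hsx
        exact hsx
      have hsxμ2 : D.pair (x + v) μ = 2 := by
        rw [map_add, LinearMap.add_apply, hKm1.2, hv2]; ring
      have hsxS2 : x + v ∈ S2 :=
        Finset.mem_filter.mpr ⟨hF2 _ hsx' (by rw [hsxμ2]; norm_num), by rw [hsxμ2]⟩
      have hLx : 0 < L x := hL x hxpos
      have hxveq : x + v = δ := by
        by_contra hne'
        have hmem' : x + v ∈ T := Finset.mem_erase.mpr ⟨hne', hsxS2⟩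
        have := hvmax _ hmem'
        simp only [map_add] at this
        linarith
      -- now x = δ - v =: τ; derive e := pair δ (coroot x) = 0 then contradiction
      obtain ⟨Ez, hEz⟩ := D.crystallographic δ hδR x hxR
      have hE0 : (Ez : ℝ) = 0 := by
        by_contra hEne
        refine QMAux.chain0 D δ x hδR hxR ?_ (by rw [hEz]; exact_mod_cast hEne)
        rw [← hμδ]
        exact hKm1.2
      have hf : D.pair v (D.coroot x) = -2 := by
        have hvδx : v = δ - x := by rw [← hxveq]; abel
        rw [hvδx, map_sub, LinearMap.sub_apply, hEz, hE0, D.pair_self_eq_two x hxR]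
        ring
      have hs2 := D.reflect_root_mem x hxR v hvR
      rw [hf, show v - (-2 : ℝ) • x = v + (2 : ℝ) • x from by module] at hs2
      have hμ2 : D.pair (v + (2 : ℝ) • x) μ = 2 := by
        rw [map_add, LinearMap.add_apply, map_smul, LinearMap.smul_apply,
          smul_eq_mul, hv2, hKm1.2]
        ring
      have hS2'' : v + (2 : ℝ) • x ∈ S2 :=
        Finset.mem_filter.mpr ⟨hF2 _ hs2 (by rw [hμ2]; norm_num), by rw [hμ2]⟩
      have hne'' : v + (2 : ℝ) • x ≠ δ := by
        intro heq
        have hx0' : x = 0 := by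
          have h' : v + (2 : ℝ) • x = x + v := heq.trans hxveq.symm
          have : (2 : ℝ) • x - x = 0 := by
            have := sub_eq_zero.mpr h'
            rw [show v + (2 : ℝ) • x - (x + v) = (2 : ℝ) • x - x from by module] at this
            exact this
          rw [show (2 : ℝ) • x - x = (1 : ℝ) • x from by module, one_smul] at this
          exact this
        exact D.root_ne_zero x hxR hx0'
      have hmem'' : v + (2 : ℝ) • x ∈ T := Finset.mem_erase.mpr ⟨hne'', hS2''⟩
      have := hvmax _ hmem''
      simp only [map_add, map_smul, smul_eq_mul] at this
      linarith
    -- final minimality contradiction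
    have hvcoX : D.coroot v ∈ D.X := D.coroot_mem_X v hvR
    have hvc0 : D.coroot v ≠ 0 := by
      intro h0
      have := D.pair_self_eq_two v hvR
      rw [h0, map_zero] at this
      norm_num at this
    have hleQ : D.leQ (D.coroot v) μ := by
      show μ - D.coroot v ∈ D.Qpos
      have hcw : D.coroot (-w) = μ - D.coroot v := by
        rw [D.coroot_neg w hwR, hwco]; abel
      rw [← hcw]
      exact hQpos_coroot (-w) hwneg
    have hfin := hμmin (D.coroot v) ⟨hvcoX, hvdom⟩ hvc0 hleQ
    rw [hfin] at hd1
    rw [hc2] at hd1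
    norm_num at hd1
  have hγδ : γ = δ := hS2single γ hγS2
  constructor
  · rw [hγδ]; exact hμδ
  · intro γ' hγ' h2'
    have hγ'S2 : γ' ∈ S2 := Finset.mem_filter.mpr ⟨hF2 γ' hγ' (by linarith), h2'⟩
    rw [hS2single γ' hγ'S2, hγδ]


end
end

section
/- Let μ be an element of M and let γ ∈ R be a root with ⟨γ, μ⟩ ≥ 2 (so that μ = γ∨). Then γ is a maximal positive root: γ ∈ R₊, γ is dominant as an element of V (i.e. ⟨γ, α∨⟩ ≥ 0 for all α ∈ R₊), and for every root α lying in the same irreducible component of R as γ one has γ − α ∈ ℕΔ (the ℕ-span of the simple roots); that is, γ is the highest root of its irreducible component. -/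
open scoped BigOperators Classical

noncomputable section

namespace RootSystemData

variable {V V' : Type} [AddCommGroup V] [Module ℝ V] [FiniteDimensional ℝ V]
  [AddCommGroup V'] [Module ℝ V'] [FiniteDimensional ℝ V']
  (D : RootSystemData V V') {α β δ : V}

lemma one_le_of_int_pos {r : ℝ} (h : ∃ n : ℤ, r = n) (hr : 0 < r) : 1 ≤ r := by
  obtain ⟨n, rfl⟩ := h
  have : (0:ℤ) < n := by exact_mod_cast hr
  exact_mod_cast this

lemma le_neg_one_of_int_neg {r : ℝ} (h : ∃ n : ℤ, r = n) (hr : r < 0) : r ≤ -1 := by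
  obtain ⟨n, rfl⟩ := h
  have : n < (0:ℤ) := by exact_mod_cast hr
  have : n ≤ -1 := by omega
  exact_mod_cast this

lemma mem_Rpos : α ∈ D.Rpos ↔ α ∈ D.R ∧ α ∈ AddSubmonoid.closure (D.Δ : Set V) :=
  Finset.mem_filter

lemma Rpos_subset (h : α ∈ D.Rpos) : α ∈ D.R := (D.mem_Rpos.mp h).1

lemma rpos_or_neg (hα : α ∈ D.R) : α ∈ D.Rpos ∨ -α ∈ D.Rpos := by
  rcases D.base_generates α hα with h | h
  · exact Or.inl (D.mem_Rpos.mpr ⟨hα, h⟩)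
  · exact Or.inr (D.mem_Rpos.mpr ⟨D.neg_mem α hα, h⟩)

/-- The symmetric invariant form on `V'`. -/
def BF : V' →ₗ[ℝ] V' →ₗ[ℝ] ℝ :=
  ∑ α ∈ D.R, (LinearMap.mul ℝ ℝ).compl₁₂ (D.pair α) (D.pair α)

lemma BF_apply (x y : V') : D.BF x y = ∑ α ∈ D.R, D.pair α x * D.pair α y := by
  simp [BF, LinearMap.sum_apply]

lemma BF_symm (x y : V') : D.BF x y = D.BF y x := by
  simp only [BF_apply]; exact Finset.sum_congr rfl fun _ _ => mul_comm _ _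

lemma BF_self_nonneg (x : V') : 0 ≤ D.BF x x := by
  rw [BF_apply]; exact Finset.sum_nonneg fun _ _ => mul_self_nonneg _

lemma BF_radical {x : V'} (h : D.BF x x = 0) (hδ : δ ∈ D.R) : D.pair δ x = 0 := by
  rw [BF_apply] at h
  have := (Finset.sum_eq_zero_iff_of_nonneg (fun i _ => mul_self_nonneg (D.pair i x))).mp h δ hδ
  nlinarith [this]

lemma BF_diag_ge (hα : α ∈ D.R) : 4 ≤ D.BF (D.coroot α) (D.coroot α) := by
  rw [BF_apply]
  have h1 : D.pair α (D.coroot α) * D.pair α (D.coroot α) = 4 := by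
    rw [D.pair_self_eq_two α hα]; norm_num
  calc (4:ℝ) = D.pair α (D.coroot α) * D.pair α (D.coroot α) := h1.symm
  _ ≤ _ := Finset.single_le_sum (fun i _ => mul_self_nonneg (D.pair i (D.coroot α))) hα

lemma BF_diag_pos (hα : α ∈ D.R) : 0 < D.BF (D.coroot α) (D.coroot α) :=
  lt_of_lt_of_le (by norm_num) (D.BF_diag_ge hα)

lemma pair_reflect' (hα : α ∈ D.R) (δ : V) (x : V') :
    D.pair δ (x - D.pair α x • D.coroot α) = D.pair (δ - D.pair δ (D.coroot α) • α) x := by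
  simp only [map_sub, map_smul, LinearMap.sub_apply, LinearMap.smul_apply, smul_eq_mul]
  ring

lemma reflectV_mem (hα : α ∈ D.R) (hδ : δ ∈ D.R) :
    δ - D.pair δ (D.coroot α) • α ∈ D.R := D.reflect_root_mem α hα δ hδ

lemma reflectV_invol (hα : α ∈ D.R) (δ : V) :
    (δ - D.pair δ (D.coroot α) • α) - D.pair (δ - D.pair δ (D.coroot α) • α) (D.coroot α) • α
      = δ := by
  have h : D.pair (δ - D.pair δ (D.coroot α) • α) (D.coroot α) = - D.pair δ (D.coroot α) := by
    simp only [map_sub, map_smul, LinearMap.sub_apply, LinearMap.smul_apply, smul_eq_mul,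
      D.pair_self_eq_two α hα]
    ring
  rw [h, neg_smul, sub_neg_eq_add, sub_add_cancel]

lemma BF_reflect (hα : α ∈ D.R) (x y : V') :
    D.BF (x - D.pair α x • D.coroot α) (y - D.pair α y • D.coroot α) = D.BF x y := by
  rw [BF_apply, BF_apply]
  refine Finset.sum_nbij' (fun δ => δ - D.pair δ (D.coroot α) • α)
    (fun δ => δ - D.pair δ (D.coroot α) • α)
    (fun δ hδ => D.reflectV_mem hα hδ) (fun δ hδ => D.reflectV_mem hα hδ)
    (fun δ _ => D.reflectV_invol hα δ) (fun δ _ => D.reflectV_invol hα δ) ?_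
  intro δ hδ
  rw [D.pair_reflect' hα δ x, D.pair_reflect' hα δ y]

lemma KI (hα : α ∈ D.R) (x : V') :
    D.pair α x * D.BF (D.coroot α) (D.coroot α) = 2 * D.BF x (D.coroot α) := by
  have h := D.BF_reflect hα x (D.coroot α)
  have e1 : D.coroot α - D.pair α (D.coroot α) • D.coroot α = -(D.coroot α) := by
    rw [D.pair_self_eq_two α hα, two_smul]; abel
  rw [e1, map_sub, map_smul] at h
  simp only [LinearMap.sub_apply, LinearMap.smul_apply, map_neg, smul_eq_mul, mul_neg] at h
  linarith [h]

end RootSystemData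
namespace RootSystemData

variable {V V' : Type} [AddCommGroup V] [Module ℝ V] [FiniteDimensional ℝ V]
  [AddCommGroup V'] [Module ℝ V'] [FiniteDimensional ℝ V']
  (D : RootSystemData V V') {α β δ : V}

lemma SC_eq (hα : α ∈ D.R) (hβ : β ∈ D.R) :
    D.pair α (D.coroot β) * D.BF (D.coroot α) (D.coroot α)
      = D.pair β (D.coroot α) * D.BF (D.coroot β) (D.coroot β) := by
  have h1 := D.KI hα (D.coroot β)
  have h2 := D.KI hβ (D.coroot α)
  rw [D.BF_symm (D.coroot β) (D.coroot α)] at h1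
  linarith

lemma SC_pos (hα : α ∈ D.R) (hβ : β ∈ D.R) (h : 0 < D.pair α (D.coroot β)) :
    0 < D.pair β (D.coroot α) := by
  have := D.SC_eq hα hβ
  have ha := D.BF_diag_pos hα
  have hb := D.BF_diag_pos hβ
  nlinarith

lemma SC_nonneg (hα : α ∈ D.R) (hβ : β ∈ D.R) (h : 0 ≤ D.pair α (D.coroot β)) :
    0 ≤ D.pair β (D.coroot α) := by
  have := D.SC_eq hα hβ
  have ha := D.BF_diag_pos hα
  have hb := D.BF_diag_pos hβ
  nlinarith

lemma SC_zero (hα : α ∈ D.R) (hβ : β ∈ D.R) (h : D.pair α (D.coroot β) = 0) :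
    D.pair β (D.coroot α) = 0 := by
  have := D.SC_eq hα hβ
  have ha := D.BF_diag_pos hα
  have hb := D.BF_diag_pos hβ
  nlinarith

lemma SC_ne (hα : α ∈ D.R) (hβ : β ∈ D.R) (h : D.pair α (D.coroot β) ≠ 0) :
    D.pair β (D.coroot α) ≠ 0 := by
  intro h0
  exact h (D.SC_zero hβ hα h0)

lemma BF_expand (s t : ℝ) (x y : V') :
    D.BF (s•x - t•y) (s•x - t•y)
      = s*s*D.BF x x - 2*(s*t*D.BF x y) + t*t*D.BF y y := by
  simp only [map_sub, map_smul, LinearMap.sub_apply, LinearMap.smul_apply, smul_eq_mul,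
    D.BF_symm y x]
  ring

lemma pq_le_four (hα : α ∈ D.R) (hβ : β ∈ D.R) :
    D.pair α (D.coroot β) * D.pair β (D.coroot α) ≤ 4 := by
  have h1 := D.KI hα (D.coroot β)
  have h2 := D.KI hβ (D.coroot α)
  rw [D.BF_symm (D.coroot α) (D.coroot β)] at h2
  have ha := D.BF_diag_ge hα
  have hb := D.BF_diag_ge hβ
  have hcs : 0 ≤ D.BF (D.coroot β) (D.coroot β) * D.BF (D.coroot β) (D.coroot β) * D.BF (D.coroot α) (D.coroot α)
      - 2*(D.BF (D.coroot β) (D.coroot β) * D.BF (D.coroot β) (D.coroot α) * (D.BF (D.coroot α) (D.coroot β)))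
      + D.BF (D.coroot β) (D.coroot α) * D.BF (D.coroot β) (D.coroot α) * D.BF (D.coroot β) (D.coroot β) := by
    rw [← D.BF_expand (D.BF (D.coroot β) (D.coroot β)) (D.BF (D.coroot β) (D.coroot α)) (D.coroot α) (D.coroot β)]
    exact D.BF_self_nonneg _
  rw [D.BF_symm (D.coroot α) (D.coroot β)] at hcs
  set a := D.BF (D.coroot α) (D.coroot α)
  set b := D.BF (D.coroot β) (D.coroot β)
  set c := D.BF (D.coroot β) (D.coroot α)
  set p := D.pair α (D.coroot β)
  set q := D.pair β (D.coroot α)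
  -- h1 : p * a = 2c, h2 : q * b = 2c, hcs : 0 ≤ b*b*a - 2*(b*c*c) + c*c*b = b*(a*b - c*c)
  have hab : (0:ℝ) < a * b := by nlinarith
  have hc2 : c * c ≤ a * b := by nlinarith
  have h4 : p * q * (a*b) = 4 * (c*c) := by
    have : (p*a) * (q*b) = (2*c) * (2*c) := by rw [h1, h2]
    nlinarith [this]
  nlinarith [h4, hc2, hab]

lemma transv' (hα : α ∈ D.R) (hβ : β ∈ D.R) (h2 : D.pair α (D.coroot β) = 2)
    (hall : ∀ δ ∈ D.R, D.pair α (D.coroot δ) = D.pair β (D.coroot δ)) :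
    D.coroot α = D.coroot β := by
  by_contra hne
  have hba : D.pair β (D.coroot α) = 2 := by rw [← hall α hα, D.pair_self_eq_two α hα]
  have hbb : D.pair β (D.coroot β) = 2 := D.pair_self_eq_two β hβ
  set v := D.coroot α - D.coroot β with hv
  have keystep : ∀ x, x ∈ D.coroot '' (D.R : Set V) → D.pair β x = 2 →
      (x + (2:ℝ) • v ∈ D.coroot '' (D.R : Set V) ∧ D.pair β (x + (2:ℝ) • v) = 2) := by
    intro x hx hbx
    obtain ⟨z, hz, rfl⟩ := hx
    have hax : D.pair α (D.coroot z) = 2 := by rw [hall z hz]; exact hbx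
    have hx' : D.coroot z - D.pair β (D.coroot z) • D.coroot β ∈ D.coroot '' (D.R : Set V) :=
      D.reflect_coroot_mem β hβ z hz
    rw [hbx] at hx'
    obtain ⟨w, hw, hweq⟩ := hx'
    have hx'' : D.coroot w - D.pair α (D.coroot w) • D.coroot α ∈ D.coroot '' (D.R : Set V) :=
      D.reflect_coroot_mem α hα w hw
    have haw : D.pair α (D.coroot w) = -2 := by
      rw [hweq, map_sub, map_smul, smul_eq_mul, hax, h2]; norm_num
    rw [haw] at hx''
    have heq : D.coroot w - (-2:ℝ) • D.coroot α
        = D.coroot z + (2:ℝ) • v := by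
      rw [hweq, hv]; simp only [neg_smul, sub_neg_eq_add, smul_sub]; abel
    rw [heq] at hx''
    constructor
    · exact hx''
    · rw [map_add, map_smul, smul_eq_mul, hbx, hv, map_sub, hba, hbb]; ring
  have hmem : ∀ n : ℕ, D.coroot β + (2*(n:ℝ)) • v ∈ D.coroot '' (D.R : Set V) ∧
      D.pair β (D.coroot β + (2*(n:ℝ)) • v) = 2 := by
    intro n
    induction n with
    | zero => simpa using ⟨⟨β, hβ, rfl⟩, hbb⟩
    | succ n ih =>
      have := keystep _ ih.1 ih.2
      have heq : D.coroot β + (2*(n:ℝ)) • v + (2:ℝ) • v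
          = D.coroot β + (2*((n:ℝ)+1)) • v := by
        rw [add_assoc, ← add_smul]; ring_nf
      rw [heq] at this
      push_cast
      exact this
  have hmem' : ∀ n : ℕ, D.coroot β + (2*(n:ℝ)) • v ∈ D.R.image D.coroot := by
    intro n
    obtain ⟨⟨z, hz, hzeq⟩, -⟩ := hmem n
    exact Finset.mem_image.mpr ⟨z, hz, hzeq⟩
  obtain ⟨m, n, hmn, h⟩ := Finite.exists_ne_map_eq_of_infinite
    (fun k : ℕ => (⟨_, hmem' k⟩ : {x // x ∈ D.R.image D.coroot}))
  have h' : D.coroot β + (2*(m:ℝ)) • v = D.coroot β + (2*(n:ℝ)) • v := by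
    simpa using congrArg Subtype.val h
  have hAB : (2*(m:ℝ)) • v = (2*(n:ℝ)) • v := add_left_cancel h'
  have hv0 : ((2*(m:ℝ)) - 2*(n:ℝ)) • v = 0 := by rw [sub_smul, hAB, sub_self]
  have hcoef : (2*(m:ℝ)) - 2*(n:ℝ) ≠ 0 := by
    intro hc
    apply hmn
    have : (m:ℝ) = n := by linarith
    exact_mod_cast this
  have := (smul_eq_zero.mp hv0).resolve_left hcoef
  exact hne (by rw [hv] at this; exact sub_eq_zero.mp this)

lemma eq_of_coroot_eq (hα : α ∈ D.R) (hβ : β ∈ D.R) (hc : D.coroot α = D.coroot β) :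
    α = β := by
  by_contra hne
  have hpββ : D.pair β (D.coroot α) = 2 := by rw [hc]; exact D.pair_self_eq_two β hβ
  have keystep : ∀ x, x ∈ D.R → D.pair x (D.coroot α) = 2 →
      (x - (2:ℝ) • (α - β) ∈ D.R ∧ D.pair (x - (2:ℝ) • (α - β)) (D.coroot α) = 2) := by
    intro x hx hpx
    have hx' : x - D.pair x (D.coroot α) • α ∈ D.R := D.reflect_root_mem α hα x hx
    rw [hpx] at hx'
    have hpx' : D.pair (x - (2:ℝ) • α) (D.coroot β) = -2 := by
      rw [← hc, map_sub, map_smul]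
      simp only [LinearMap.sub_apply, LinearMap.smul_apply, smul_eq_mul]
      rw [hpx, D.pair_self_eq_two α hα]; ring
    have hx'' : (x - (2:ℝ)•α) - D.pair (x - (2:ℝ)•α) (D.coroot β) • β ∈ D.R :=
      D.reflect_root_mem β hβ _ hx'
    rw [hpx'] at hx''
    have heq : (x - (2:ℝ)•α) - (-2:ℝ) • β = x - (2:ℝ) • (α - β) := by
      rw [smul_sub, neg_smul]; abel
    rw [heq] at hx''
    refine ⟨hx'', ?_⟩
    rw [map_sub, map_smul]
    simp only [LinearMap.sub_apply, LinearMap.smul_apply, smul_eq_mul]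
    rw [hpx, map_sub]
    simp only [LinearMap.sub_apply]
    rw [D.pair_self_eq_two α hα, hpββ]; ring
  have hmem : ∀ n : ℕ, α - (2*(n:ℝ)) • (α - β) ∈ D.R ∧
      D.pair (α - (2*(n:ℝ)) • (α - β)) (D.coroot α) = 2 := by
    intro n
    induction n with
    | zero => simpa using ⟨hα, D.pair_self_eq_two α hα⟩
    | succ n ih =>
      have := keystep _ ih.1 ih.2
      have heq : α - (2*(n:ℝ)) • (α - β) - (2:ℝ) • (α - β)
          = α - (2*((n:ℝ)+1)) • (α - β) := by
        rw [sub_sub, ← add_smul]; ring_nf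
      rw [heq] at this
      push_cast
      exact this
  obtain ⟨m, n, hmn, h⟩ := Finite.exists_ne_map_eq_of_infinite
    (fun k : ℕ => (⟨_, (hmem k).1⟩ : {x // x ∈ D.R}))
  have h' : α - (2*(m:ℝ)) • (α - β) = α - (2*(n:ℝ)) • (α - β) := by
    simpa using congrArg Subtype.val h
  have hAB : (2*(m:ℝ)) • (α - β) = (2*(n:ℝ)) • (α - β) := by
    have := sub_right_injective h'
    exact this
  have hv0 : ((2*(m:ℝ)) - 2*(n:ℝ)) • (α - β) = 0 := by rw [sub_smul, hAB, sub_self]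
  have hcoef : (2*(m:ℝ)) - 2*(n:ℝ) ≠ 0 := by
    intro hc
    apply hmn
    have : (m:ℝ) = n := by linarith
    exact_mod_cast this
  have := (smul_eq_zero.mp hv0).resolve_left hcoef
  exact hne (sub_eq_zero.mp this)

lemma trans2 (hα : α ∈ D.R) (hβ : β ∈ D.R) (hp : D.pair α (D.coroot β) = 2)
    (hq : D.pair β (D.coroot α) = 2) : α = β := by
  have h1 := D.KI hα (D.coroot β)
  have h2 := D.KI hβ (D.coroot α)
  rw [hp] at h1; rw [hq] at h2
  have hsymm := D.BF_symm (D.coroot β) (D.coroot α)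
  have hzero : D.BF (D.coroot α - D.coroot β) (D.coroot α - D.coroot β) = 0 := by
    simp only [map_sub, LinearMap.sub_apply]
    linarith
  have hrad : ∀ z ∈ D.R, D.pair z (D.coroot α) = D.pair z (D.coroot β) := by
    intro z hz
    have := D.BF_radical hzero hz
    rw [map_sub] at this; linarith
  have hall : ∀ δ ∈ D.R, D.pair α (D.coroot δ) = D.pair β (D.coroot δ) := by
    intro δ hδ
    have hBF : D.BF (D.coroot δ) (D.coroot α) = D.BF (D.coroot δ) (D.coroot β) := by
      rw [BF_apply, BF_apply]
      exact Finset.sum_congr rfl fun z hz => by rw [hrad z hz]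
    have k1 := D.KI hα (D.coroot δ)
    have k2 := D.KI hβ (D.coroot δ)
    have haa : D.BF (D.coroot α) (D.coroot α) = D.BF (D.coroot β) (D.coroot β) := by
      linarith
    have hapos := D.BF_diag_pos hα
    have hmul : D.pair α (D.coroot δ) * D.BF (D.coroot α) (D.coroot α)
        = D.pair β (D.coroot δ) * D.BF (D.coroot α) (D.coroot α) := by
      rw [k1, haa, k2, hBF]
    exact mul_right_cancel₀ (ne_of_gt hapos) hmul
  exact D.eq_of_coroot_eq hα hβ (D.transv' hα hβ hp hall)

lemma coroot_inj (hα : α ∈ D.R) (hβ : β ∈ D.R) (hc : D.coroot α = D.coroot β) : α = β :=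
  D.eq_of_coroot_eq hα hβ hc

lemma root_sub_mem (hα : α ∈ D.R) (hβ : β ∈ D.R) (hne : α ≠ β)
    (hpos : 0 < D.pair α (D.coroot β)) : α - β ∈ D.R := by
  have hq : 0 < D.pair β (D.coroot α) := D.SC_pos hα hβ hpos
  obtain ⟨np, hnp⟩ := D.crystallographic α hα β hβ
  obtain ⟨nq, hnq⟩ := D.crystallographic β hβ α hα
  have hp1 : 1 ≤ np := by
    have : (0:ℝ) < np := by rw [← hnp]; exact hpos
    exact_mod_cast this
  have hq1 : 1 ≤ nq := by
    have : (0:ℝ) < nq := by rw [← hnq]; exact hq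
    exact_mod_cast this
  have hpq : np * nq ≤ 4 := by
    have := D.pq_le_four hα hβ
    rw [hnp, hnq] at this
    exact_mod_cast this
  by_cases hP : np = 1
  · have := D.reflect_root_mem β hβ α hα
    rw [hnp, hP] at this
    simpa using this
  by_cases hQ : nq = 1
  · have := D.reflect_root_mem α hα β hβ
    rw [hnq, hQ] at this
    push_cast at this
    rw [one_smul] at this
    have := D.neg_mem _ this
    rwa [neg_sub] at this
  · exfalso
    have hp2 : 2 ≤ np := by omega
    have hq2 : 2 ≤ nq := by omega
    have h22 : np = 2 ∧ nq = 2 := by constructor <;> nlinarith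
    apply hne
    apply D.trans2 hα hβ
    · rw [hnp, h22.1]; norm_num
    · rw [hnq, h22.2]; norm_num

end RootSystemData
namespace RootSystemData

variable {V V' : Type} [AddCommGroup V] [Module ℝ V] [FiniteDimensional ℝ V]
  [AddCommGroup V'] [Module ℝ V'] [FiniteDimensional ℝ V']
  (D : RootSystemData V V') {α β δ : V}

/-- The symmetric invariant form on `V`. -/
def BV : V →ₗ[ℝ] V →ₗ[ℝ] ℝ :=
  ∑ δ ∈ D.R, (LinearMap.mul ℝ ℝ).compl₁₂ (D.pair.flip (D.coroot δ)) (D.pair.flip (D.coroot δ))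

lemma BV_apply (u v : V) :
    D.BV u v = ∑ δ ∈ D.R, D.pair u (D.coroot δ) * D.pair v (D.coroot δ) := by
  simp [BV, LinearMap.sum_apply]

lemma BV_symm (u v : V) : D.BV u v = D.BV v u := by
  simp only [BV_apply]; exact Finset.sum_congr rfl fun _ _ => mul_comm _ _

lemma BV_self_nonneg (u : V) : 0 ≤ D.BV u u := by
  rw [BV_apply]; exact Finset.sum_nonneg fun _ _ => mul_self_nonneg _

lemma BV_radical {u : V} (h : D.BV u u = 0) (hδ : δ ∈ D.R) : D.pair u (D.coroot δ) = 0 := by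
  rw [BV_apply] at h
  have := (Finset.sum_eq_zero_iff_of_nonneg
    (fun i _ => mul_self_nonneg (D.pair u (D.coroot i)))).mp h δ hδ
  nlinarith [this]

lemma BV_diag_ge (hα : α ∈ D.R) : 4 ≤ D.BV α α := by
  rw [BV_apply]
  have h1 : D.pair α (D.coroot α) * D.pair α (D.coroot α) = 4 := by
    rw [D.pair_self_eq_two α hα]; norm_num
  calc (4:ℝ) = D.pair α (D.coroot α) * D.pair α (D.coroot α) := h1.symm
  _ ≤ _ := Finset.single_le_sum (fun i _ => mul_self_nonneg (D.pair α (D.coroot i))) hα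

lemma BV_diag_pos (hα : α ∈ D.R) : 0 < D.BV α α :=
  lt_of_lt_of_le (by norm_num) (D.BV_diag_ge hα)

lemma exists_reflect_coroot (hα : α ∈ D.R) (hδ : δ ∈ D.R) :
    ∃ ε ∈ D.R, D.coroot ε = D.coroot δ - D.pair α (D.coroot δ) • D.coroot α := by
  obtain ⟨ε, hε, heq⟩ := D.reflect_coroot_mem α hα δ hδ
  exact ⟨ε, hε, heq⟩

/-- a choice of root whose coroot is the reflection of `coroot δ` by `α`. -/
noncomputable def wfun (α δ : V) : V :=
  if h : α ∈ D.R ∧ δ ∈ D.R then (D.exists_reflect_coroot h.1 h.2).choose else δ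

lemma wfun_mem (hα : α ∈ D.R) (hδ : δ ∈ D.R) : D.wfun α δ ∈ D.R := by
  rw [wfun, dif_pos ⟨hα, hδ⟩]
  exact (D.exists_reflect_coroot hα hδ).choose_spec.1

lemma wfun_spec (hα : α ∈ D.R) (hδ : δ ∈ D.R) :
    D.coroot (D.wfun α δ) = D.coroot δ - D.pair α (D.coroot δ) • D.coroot α := by
  rw [wfun, dif_pos ⟨hα, hδ⟩]
  exact (D.exists_reflect_coroot hα hδ).choose_spec.2

lemma wfun_invol (hα : α ∈ D.R) (hδ : δ ∈ D.R) : D.wfun α (D.wfun α δ) = δ := by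
  apply D.coroot_inj (D.wfun_mem hα (D.wfun_mem hα hδ)) hδ
  rw [D.wfun_spec hα (D.wfun_mem hα hδ), D.wfun_spec hα hδ]
  rw [map_sub, map_smul, smul_eq_mul, D.pair_self_eq_two α hα]
  have h1 : D.pair α (D.coroot δ) - D.pair α (D.coroot δ) * 2 = - D.pair α (D.coroot δ) := by
    ring
  rw [h1, neg_smul]
  abel

lemma BV_reflect (hα : α ∈ D.R) (u v : V) :
    D.BV (u - D.pair u (D.coroot α) • α) (v - D.pair v (D.coroot α) • α) = D.BV u v := by
  rw [BV_apply, BV_apply]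
  refine Finset.sum_nbij' (fun δ => D.wfun α δ) (fun δ => D.wfun α δ)
    (fun δ hδ => D.wfun_mem hα hδ) (fun δ hδ => D.wfun_mem hα hδ)
    (fun δ hδ => D.wfun_invol hα hδ) (fun δ hδ => D.wfun_invol hα hδ) ?_
  intro δ hδ
  have key : ∀ w : V, D.pair (w - D.pair w (D.coroot α) • α) (D.coroot δ)
      = D.pair w (D.coroot (D.wfun α δ)) := by
    intro w
    rw [D.wfun_spec hα hδ, ← D.pair_reflect' hα w (D.coroot δ)]
  rw [key u, key v]

lemma KIV (hα : α ∈ D.R) (v : V) :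
    D.pair v (D.coroot α) * D.BV α α = 2 * D.BV v α := by
  have h := D.BV_reflect hα v α
  have e1 : α - D.pair α (D.coroot α) • α = -α := by
    rw [D.pair_self_eq_two α hα, two_smul]; abel
  rw [e1] at h
  simp only [map_sub, map_smul, LinearMap.sub_apply, LinearMap.smul_apply, map_neg,
    smul_eq_mul, mul_neg] at h
  linarith

lemma BV_sub_self (x y : V) :
    D.BV (x - y) (x - y) = D.BV x x - 2 * D.BV x y + D.BV y y := by
  simp only [map_sub, LinearMap.sub_apply, D.BV_symm y x]
  ring

/-- Functoriality: the coroot of a reflected root is the reflected coroot. -/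
lemma coroot_reflect (hα : α ∈ D.R) (hδ : δ ∈ D.R) :
    D.coroot (δ - D.pair δ (D.coroot α) • α)
      = D.coroot δ - D.pair α (D.coroot δ) • D.coroot α := by
  obtain ⟨ε, hε, hεeq⟩ := D.exists_reflect_coroot hα hδ
  set η := δ - D.pair δ (D.coroot α) • α with hηdef
  have hηR : η ∈ D.R := D.reflect_root_mem α hα δ hδ
  suffices h : D.coroot η = D.coroot ε by rw [h, hεeq]
  have hinv : ∀ v : V, D.pair v (D.coroot ε)
      = D.pair (v - D.pair v (D.coroot α) • α) (D.coroot δ) := by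
    intro v; rw [hεeq, ← D.pair_reflect' hα v (D.coroot δ)]
  have hBVtrans : ∀ v : V, D.BV (v - D.pair v (D.coroot α) • α) δ = D.BV v η := by
    intro v
    have := D.BV_reflect hα (v - D.pair v (D.coroot α) • α) δ
    rw [D.reflectV_invol hα v] at this
    rw [← this, hηdef]
  have hB : ∀ v : V, D.pair v (D.coroot ε) * D.BV δ δ = 2 * D.BV v η := by
    intro v
    rw [hinv v]
    rw [← hBVtrans v]
    exact D.KIV hδ _
  have hA : ∀ v : V, D.pair v (D.coroot ε) * D.BV ε ε = 2 * D.BV v ε := fun v => D.KIV hε v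
  have hδδ := D.BV_diag_pos hδ
  have hBηη : D.BV η η = D.BV δ δ := by
    have := D.BV_reflect hα δ δ
    rw [← hηdef] at this
    exact this
  have h1 : D.BV ε η = D.BV δ δ := by
    have := hB ε
    rw [D.pair_self_eq_two ε hε] at this
    linarith
  have hpηε : D.pair η (D.coroot ε) = 2 := by
    have := hB η
    rw [D.BV_symm η η] at this
    nlinarith [this, hBηη, hδδ]
  have h2 : D.BV η ε = D.BV ε ε := by
    have := hA η
    rw [hpηε] at this
    linarith
  have hεη : D.BV ε η = D.BV ε ε := by rw [D.BV_symm ε η]; exact h2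
  have hzero : D.BV (ε - η) (ε - η) = 0 := by
    rw [D.BV_sub_self, hεη, hBηη]
    have hee : D.BV ε ε = D.BV δ δ := by rw [← hεη]; exact h1
    linarith
  have hall : ∀ z ∈ D.R, D.pair ε (D.coroot z) = D.pair η (D.coroot z) := by
    intro z hz
    have := D.BV_radical hzero hz
    rw [map_sub, LinearMap.sub_apply] at this
    linarith
  have hpεη : D.pair ε (D.coroot η) = 2 := by
    rw [hall η hηR]; exact D.pair_self_eq_two η hηR
  exact (D.transv' hε hηR hpεη hall).symm

end RootSystemData
namespace RootSystemData

variable {V V' : Type} [AddCommGroup V] [Module ℝ V] [FiniteDimensional ℝ V]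
  [AddCommGroup V'] [Module ℝ V'] [FiniteDimensional ℝ V']
  (D : RootSystemData V V') {α β δ x : V} {μ ν : V'}

lemma exists_ht : ∃ φ : V →ₗ[ℝ] ℝ, ∀ β ∈ D.Δ, φ β = 1 := by
  have hs : LinearIndepOn ℝ id (D.Δ : Set V) := D.base_indep
  let b := Module.Basis.extend hs
  refine ⟨b.constr ℝ (fun i => if (i : V) ∈ D.Δ then (1:ℝ) else 0), ?_⟩
  intro β hβ
  have hmem : β ∈ hs.extend (Set.subset_univ _) :=
    hs.subset_extend _ (Finset.mem_coe.mpr hβ)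
  have hbe : (⟨β, hmem⟩ : hs.extend (Set.subset_univ _)) = (β:V) := rfl
  have : (β : V) = b ⟨β, hmem⟩ := by
    rw [Module.Basis.extend_apply_self]
  rw [this, Module.Basis.constr_basis]
  simp [hβ]

noncomputable def ht : V →ₗ[ℝ] ℝ := D.exists_ht.choose

lemma ht_base (hβ : β ∈ D.Δ) : D.ht β = 1 := D.exists_ht.choose_spec β hβ

lemma ht_facts (hx : x ∈ AddSubmonoid.closure (D.Δ : Set V)) :
    0 ≤ D.ht x ∧ (x = 0 ∨ 1 ≤ D.ht x) := by
  refine AddSubmonoid.closure_induction ?_ ?_ ?_ hx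
  · intro z hz
    have hz1 : D.ht z = 1 := D.ht_base hz
    exact ⟨by rw [hz1]; norm_num, Or.inr (by rw [hz1])⟩
  · simp
  · intro a b _ _ iha ihb
    constructor
    · rw [map_add]; linarith [iha.1, ihb.1]
    · rcases iha.2 with h | h
      · rcases ihb.2 with h' | h'
        · exact Or.inl (by rw [h, h', add_zero])
        · exact Or.inr (by rw [map_add]; linarith [iha.1])
      · exact Or.inr (by rw [map_add]; linarith [ihb.1])

lemma ht_nonneg (hx : x ∈ AddSubmonoid.closure (D.Δ : Set V)) : 0 ≤ D.ht x :=
  (D.ht_facts hx).1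

lemma ht_rpos (hx : x ∈ D.Rpos) : 1 ≤ D.ht x := by
  have h := (D.ht_facts (D.mem_Rpos.mp hx).2).2
  rcases h with h | h
  · exact absurd h (D.root_ne_zero x (D.Rpos_subset hx))
  · exact h

lemma not_rpos_neg (hx : x ∈ D.Rpos) : -x ∉ D.Rpos := by
  intro h
  have h1 := D.ht_rpos hx
  have h2 := D.ht_rpos h
  rw [map_neg] at h2
  linarith

lemma mem_Rpos_of_pos (hz : δ ∈ D.R) (hdom : D.Dominant μ) (h : 0 < D.pair δ μ) :
    δ ∈ D.Rpos := by
  rcases D.rpos_or_neg hz with h' | h'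
  · exact h'
  · exfalso
    have := hdom _ h'
    rw [map_neg, LinearMap.neg_apply] at this
    linarith

lemma neg_mem_Rpos_of_neg (hz : δ ∈ D.R) (hdom : D.Dominant μ) (h : D.pair δ μ < 0) :
    -δ ∈ D.Rpos := by
  have := D.mem_Rpos_of_pos (D.neg_mem δ hz) hdom (by rw [map_neg, LinearMap.neg_apply]; linarith)
  exact this

/-- The `2ρ`-functional on `V'`. -/
def FL : V' →ₗ[ℝ] ℝ := ∑ δ ∈ D.Rpos, D.pair δ

lemma FL_apply (y : V') : D.FL y = ∑ δ ∈ D.Rpos, D.pair δ y := by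
  simp [FL, LinearMap.sum_apply]

lemma FL_zero_of_radical {y : V'} (h : ∀ δ ∈ D.R, D.pair δ y = 0) : D.FL y = 0 := by
  rw [FL_apply]
  exact Finset.sum_eq_zero fun δ hδ => h δ (D.Rpos_subset hδ)

lemma int_pair_coroot (hα : α ∈ D.R) (hβ : β ∈ D.R) : ∃ n : ℤ, D.pair α (D.coroot β) = n :=
  D.crystallographic α hα β hβ

lemma nsmul_closure_mem {n : ℕ} (hx : x ∈ AddSubmonoid.closure (D.Δ : Set V)) :
    (n:ℝ) • x ∈ AddSubmonoid.closure (D.Δ : Set V) := by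
  rw [Nat.cast_smul_eq_nsmul ℝ n x]
  exact nsmul_mem hx n

lemma FL_coroot_ge_two (hx : x ∈ D.Rpos) : 2 ≤ D.FL (D.coroot x) := by
  have hxR := D.Rpos_subset hx
  rw [FL_apply]
  classical
  have hsplit := Finset.sum_filter_add_sum_filter_not D.Rpos
    (fun δ => δ - D.pair δ (D.coroot x) • x ∈ D.Rpos) (fun δ => D.pair δ (D.coroot x))
  have hD0 : ∑ δ ∈ D.Rpos.filter (fun δ => δ - D.pair δ (D.coroot x) • x ∈ D.Rpos),
      D.pair δ (D.coroot x) = 0 := by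
    apply Finset.sum_involution (fun δ _ => δ - D.pair δ (D.coroot x) • x)
    · intro a ha
      rw [map_sub, map_smul]
      simp only [LinearMap.sub_apply, LinearMap.smul_apply, smul_eq_mul]
      rw [D.pair_self_eq_two x hxR]
      ring
    · intro a ha hfa
      intro heq
      have : D.pair a (D.coroot x) • x = 0 := by
        have := sub_eq_self.mp heq
        exact this
      rcases smul_eq_zero.mp this with h | h
      · exact hfa h
      · exact D.root_ne_zero x hxR h
    · intro a ha
      rw [Finset.mem_filter] at ha ⊢
      refine ⟨ha.2, ?_⟩
      rw [D.reflectV_invol hxR a]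
      exact ha.1
    · intro a ha
      exact D.reflectV_invol hxR a
  have hD1terms : ∀ δ ∈ D.Rpos.filter (fun δ => ¬(δ - D.pair δ (D.coroot x) • x ∈ D.Rpos)),
      1 ≤ D.pair δ (D.coroot x) := by
    intro δ hδ
    rw [Finset.mem_filter] at hδ
    obtain ⟨hδp, hδn⟩ := hδ
    have hδR := D.Rpos_subset hδp
    obtain ⟨n, hn⟩ := D.int_pair_coroot hδR hxR
    by_contra hlt
    push_neg at hlt
    have hn0 : n ≤ 0 := by
      have h1 : (n:ℝ) < 1 := by rw [← hn]; exact hlt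
      have h2 : n < (1:ℤ) := by exact_mod_cast h1
      omega
    apply hδn
    have hmemR : δ - D.pair δ (D.coroot x) • x ∈ D.R :=
      D.reflect_root_mem x hxR δ hδR
    rw [D.mem_Rpos]
    refine ⟨hmemR, ?_⟩
    have heq : δ - D.pair δ (D.coroot x) • x = δ + ((-n).toNat : ℝ) • x := by
      rw [hn]
      have : ((-n).toNat : ℝ) = -(n:ℝ) := by
        have h' : ((-n).toNat : ℤ) = -n := Int.toNat_of_nonneg (by omega)
        exact_mod_cast congrArg (Int.cast : ℤ → ℝ) h'
      rw [this]
      module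
    rw [heq]
    exact AddSubmonoid.add_mem _ (D.mem_Rpos.mp hδp).2 (D.nsmul_closure_mem (D.mem_Rpos.mp hx).2)
  have hxD1 : x ∈ D.Rpos.filter (fun δ => ¬(δ - D.pair δ (D.coroot x) • x ∈ D.Rpos)) := by
    rw [Finset.mem_filter]
    refine ⟨hx, ?_⟩
    rw [D.pair_self_eq_two x hxR, two_smul]
    have : x - (x + x) = -x := by abel
    rw [this]
    exact D.not_rpos_neg hx
  have hD1 : 2 ≤ ∑ δ ∈ D.Rpos.filter (fun δ => ¬(δ - D.pair δ (D.coroot x) • x ∈ D.Rpos)),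
      D.pair δ (D.coroot x) := by
    have hterm : D.pair x (D.coroot x) = 2 := D.pair_self_eq_two x hxR
    calc (2:ℝ) = D.pair x (D.coroot x) := hterm.symm
    _ ≤ _ := Finset.single_le_sum (fun i hi => le_trans (by norm_num) (hD1terms i hi)) hxD1
  linarith [hsplit, hD0, hD1]

lemma FL_le_of_BF (ν : V') : D.FL ν ≤ ((D.Rpos.card : ℝ) + D.BF ν ν)/2 := by
  rw [FL_apply]
  have h1 : ∑ δ ∈ D.Rpos, D.pair δ ν ≤ ∑ δ ∈ D.Rpos, (1 + D.pair δ ν * D.pair δ ν)/2 := by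
    apply Finset.sum_le_sum
    intro δ _
    nlinarith [sq_nonneg (D.pair δ ν - 1)]
  have h2 : ∑ δ ∈ D.Rpos, (1 + D.pair δ ν * D.pair δ ν)/2
      = ((D.Rpos.card : ℝ) + ∑ δ ∈ D.Rpos, D.pair δ ν * D.pair δ ν)/2 := by
    rw [← Finset.sum_div, Finset.sum_add_distrib, Finset.sum_const, nsmul_eq_mul, mul_one]
  have h3 : ∑ δ ∈ D.Rpos, D.pair δ ν * D.pair δ ν ≤ D.BF ν ν := by
    rw [BF_apply]
    exact Finset.sum_le_sum_of_subset_of_nonneg (Finset.filter_subset _ _)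
      (fun i _ _ => mul_self_nonneg _)
  linarith

end RootSystemData
namespace RootSystemData

variable {V V' : Type} [AddCommGroup V] [Module ℝ V] [FiniteDimensional ℝ V]
  [AddCommGroup V'] [Module ℝ V'] [FiniteDimensional ℝ V']
  (D : RootSystemData V V') {α β δ x : V} {μ ν : V'}

lemma multiset_sum_nonpos {T : Multiset ℝ} (h : ∀ a ∈ T, a ≤ 0) : T.sum ≤ 0 := by
  induction T using Multiset.induction_on with
  | empty => simp
  | cons a s ih =>
      rw [Multiset.sum_cons]
      have h1 := h a (Multiset.mem_cons_self a s)
      have h2 := ih (fun b hb => h b (Multiset.mem_cons_of_mem hb))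
      linarith

lemma root_add_mem (hα : α ∈ D.R) (hβ : β ∈ D.R) (hne : α ≠ -β)
    (hneg : D.pair α (D.coroot β) < 0) : α + β ∈ D.R := by
  have h1 : 0 < D.pair α (D.coroot (-β)) := by
    rw [D.coroot_neg β hβ, map_neg]; linarith
  have := D.root_sub_mem hα (D.neg_mem β hβ) hne h1
  rwa [sub_neg_eq_add] at this

lemma pair_multiset_sum (v : V) (T : Multiset V) :
    D.pair v ((T.map D.coroot).sum) = ((T.map (fun z => D.pair v (D.coroot z))).sum) := by
  rw [map_multiset_sum, Multiset.map_map]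
  rfl

lemma sum_erase_eq {S : Multiset V} (h : δ ∈ S) :
    (S.map D.coroot).sum = D.coroot δ + ((S.erase δ).map D.coroot).sum := by
  conv_lhs => rw [← Multiset.cons_erase h]
  rw [Multiset.map_cons, Multiset.sum_cons]

lemma step (hdom : D.Dominant μ) (hν : ν ∈ D.X)
    (S : Multiset V) (hS : ∀ z ∈ S, z ∈ D.Rpos)
    (hsum : μ - ν = (S.map D.coroot).sum)
    (hnd : ¬ D.Dominant ν) :
    ∃ (x : V) (S' : Multiset V), x ∈ D.Rpos ∧ (∀ z ∈ S', z ∈ D.Rpos) ∧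
      D.pair x ν ≤ -1 ∧ μ - (ν + D.coroot x) = ((S'.map D.coroot).sum) := by
  by_cases habs : ∃ δ ∈ S, D.pair δ ν ≤ -1
  · obtain ⟨δ, hδS, hδν⟩ := habs
    refine ⟨δ, S.erase δ, hS δ hδS, fun z hz => hS z (Multiset.mem_of_mem_erase hz), hδν, ?_⟩
    have he := D.sum_erase_eq hδS
    rw [he] at hsum
    have : μ - (ν + D.coroot δ) = (μ - ν) - D.coroot δ := by abel
    rw [this, hsum]; abel
  · push_neg at habs
    have hat : ∀ z ∈ S, 0 ≤ D.pair z ν := by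
      intro z hz
      obtain ⟨n, hn⟩ := D.pair_X_int z (D.Rpos_subset (hS z hz)) ν hν
      have h1 : -1 < (n:ℝ) := by rw [← hn]; exact habs z hz
      have h2 : (-1:ℤ) < n := by exact_mod_cast h1
      rw [hn]
      exact_mod_cast (by omega : (0:ℤ) ≤ n)
    have hNne : (D.Rpos.filter (fun z => D.pair z ν ≤ -1)).Nonempty := by
      rw [Dominant] at hnd
      push_neg at hnd
      obtain ⟨β₀, hβ₀, hβ₀ν⟩ := hnd
      refine ⟨β₀, Finset.mem_filter.mpr ⟨hβ₀, ?_⟩⟩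
      obtain ⟨n, hn⟩ := D.pair_X_int β₀ (D.Rpos_subset hβ₀) ν hν
      rw [hn] at hβ₀ν ⊢
      have : n < (0:ℤ) := by exact_mod_cast hβ₀ν
      exact_mod_cast (by omega : n ≤ (-1:ℤ))
    obtain ⟨β, hβN, hβmin⟩ := Finset.exists_min_image _ D.ht hNne
    rw [Finset.mem_filter] at hβN
    obtain ⟨hβp, hβν⟩ := hβN
    have hβR := D.Rpos_subset hβp
    have hNmin : ∀ z ∈ D.Rpos, D.pair z ν ≤ -1 → D.ht β ≤ D.ht z := by
      intro z hz hzν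
      exact hβmin z (Finset.mem_filter.mpr ⟨hz, hzν⟩)
    have h1le : 1 ≤ D.pair β (μ - ν) := by
      rw [map_sub]
      have := hdom β hβp
      linarith
    have hex : ∃ δ₀ ∈ S, 0 < D.pair β (D.coroot δ₀) := by
      by_contra h
      push_neg at h
      have hsum0 : D.pair β (μ - ν) ≤ 0 := by
        rw [hsum, D.pair_multiset_sum]
        apply multiset_sum_nonpos
        intro a ha
        obtain ⟨z, hz, rfl⟩ := Multiset.mem_map.mp ha
        exact h z hz
      linarith
    obtain ⟨δ₀, hδ₀S, hp0⟩ := hex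
    have hδ₀p := hS δ₀ hδ₀S
    have hδ₀R := D.Rpos_subset hδ₀p
    have hδ₀ν : 0 ≤ D.pair δ₀ ν := hat δ₀ hδ₀S
    have hne : β ≠ δ₀ := fun h => by rw [h] at hβν; linarith
    obtain ⟨np, hnp⟩ := D.int_pair_coroot hβR hδ₀R
    obtain ⟨nq, hnq⟩ := D.int_pair_coroot hδ₀R hβR
    have hq0 : 0 < D.pair δ₀ (D.coroot β) := D.SC_pos hβR hδ₀R hp0
    have hp1 : 1 ≤ np := by
      have : (0:ℝ) < np := by rw [← hnp]; exact hp0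
      exact_mod_cast this
    have hq1 : 1 ≤ nq := by
      have : (0:ℝ) < nq := by rw [← hnq]; exact hq0
      exact_mod_cast this
    have hpq4 : np * nq ≤ 4 := by
      have := D.pq_le_four hβR hδ₀R
      rw [hnp, hnq] at this
      exact_mod_cast this
    have he := D.sum_erase_eq hδ₀S
    -- σ = δ₀ - β
    have hσR : δ₀ - β ∈ D.R := D.root_sub_mem hδ₀R hβR (Ne.symm hne) hq0
    have hσν : 1 ≤ D.pair (δ₀ - β) ν := by
      rw [map_sub, LinearMap.sub_apply]; linarith
    have hσpos : δ₀ - β ∈ D.Rpos := by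
      rcases D.rpos_or_neg hσR with h | h
      · exact h
      · exfalso
        rw [neg_sub] at h
        have hmem : D.pair (β - δ₀) ν ≤ -1 := by
          rw [map_sub, LinearMap.sub_apply]; linarith
        have := hNmin _ h hmem
        rw [map_sub] at this
        have hd1 := D.ht_rpos hδ₀p
        linarith
    have hhtσ : 1 ≤ D.ht (δ₀ - β) := D.ht_rpos hσpos
    by_cases hQ : nq = 1
    · -- q = 1 : split the atom δ₀∨ = σ∨ + p β∨
      have hσeq : δ₀ - β = δ₀ - D.pair δ₀ (D.coroot β) • β := by
        rw [hnq, hQ]; push_cast; rw [one_smul]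
      have hσc : D.coroot (δ₀ - β)
          = D.coroot δ₀ - D.pair β (D.coroot δ₀) • D.coroot β := by
        rw [hσeq]; exact D.coroot_reflect hβR hδ₀R
      set k := (np - 1).toNat with hk
      have hkc : (k:ℝ) = (np:ℝ) - 1 := by
        have h' : ((np - 1).toNat : ℤ) = np - 1 := Int.toNat_of_nonneg (by omega)
        rw [hk]
        exact_mod_cast congrArg (Int.cast : ℤ → ℝ) h'
      refine ⟨β, (δ₀ - β) ::ₘ (Multiset.replicate k β + S.erase δ₀), hβp, ?_, hβν, ?_⟩
      · intro z hz
        rcases Multiset.mem_cons.mp hz with h | h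
        · rw [h]; exact hσpos
        · rcases Multiset.mem_add.mp h with h' | h'
          · rw [Multiset.eq_of_mem_replicate h']; exact hβp
          · exact hS z (Multiset.mem_of_mem_erase h')
      · rw [Multiset.map_cons, Multiset.sum_cons, Multiset.map_add, Multiset.sum_add,
          Multiset.map_replicate, Multiset.sum_replicate]
        rw [hσc, hnp]
        have hLHS : μ - (ν + D.coroot β) = (μ - ν) - D.coroot β := by abel
        rw [hLHS, hsum, he]
        rw [← Nat.cast_smul_eq_nsmul ℝ k (D.coroot β), hkc]
        module
    · -- q ≥ 2
      have hq2 : 2 ≤ nq := by omega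
      have hP1 : np = 1 := by
        by_contra hP
        have hp2 : 2 ≤ np := by omega
        have h22 : np = 2 ∧ nq = 2 := by constructor <;> nlinarith
        exact hne (D.trans2 hβR hδ₀R (by rw [hnp, h22.1]; norm_num)
          (by rw [hnq, h22.2]; norm_num))
    -- exclude q = 4 via radical argument
      have hq4 : nq ≠ 4 := by
        intro h4
        have k1 := D.KI hβR (D.coroot δ₀)
        have k2 := D.KI hδ₀R (D.coroot β)
        rw [hnp, hP1] at k1
        rw [hnq, h4] at k2
        push_cast at k1 k2
        rw [one_mul] at k1
        rw [D.BF_symm (D.coroot β) (D.coroot δ₀)] at k2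
        -- k1 : b = 2c, k2 : 4d = 2c  where c = BF δ₀∨ β∨
        set b := D.BF (D.coroot β) (D.coroot β) with hb
        set d := D.BF (D.coroot δ₀) (D.coroot δ₀) with hd
        set c := D.BF (D.coroot δ₀) (D.coroot β) with hc
        have hdpos := D.BF_diag_pos hδ₀R
        rw [← hd] at hdpos
        have hzero : D.BF (d • D.coroot β - c • D.coroot δ₀)
            (d • D.coroot β - c • D.coroot δ₀) = 0 := by
          rw [D.BF_expand]
          rw [← hb, ← hd, D.BF_symm (D.coroot β) (D.coroot δ₀), ← hc]
          linear_combination (d*d) * k1 + (d*c/2) * k2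
        have hrad : ∀ z ∈ D.R, D.pair z (D.coroot β) = 2 * D.pair z (D.coroot δ₀) := by
          intro z hz
          have := D.BF_radical hzero hz
          rw [map_sub, map_smul, map_smul] at this
          simp only [smul_eq_mul] at this
          have hcd : c = 2 * d := by linarith
          rw [hcd] at this
          have h0 : (D.pair z (D.coroot β) - 2 * D.pair z (D.coroot δ₀)) * d = 0 := by
            linear_combination this
          have := (mul_eq_zero.mp h0).resolve_right (ne_of_gt hdpos)
          linarith
        have hBFh : D.BF ν (D.coroot β) = 2 * D.BF ν (D.coroot δ₀) := by
          rw [BF_apply, BF_apply, Finset.mul_sum]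
          refine Finset.sum_congr rfl fun z hz => ?_
          rw [hrad z hz]; ring
        have kk1 := D.KI hβR ν
        have kk2 := D.KI hδ₀R ν
        rw [← hb] at kk1
        rw [← hd] at kk2
        -- pair β ν * b = 2 BF ν β∨ = 4 BF ν δ₀∨ ; pair δ₀ ν * d = 2 BF ν δ₀∨
        -- b = 2c = 4d
        have hb4d : b = 4 * d := by linarith
        have : D.pair δ₀ ν = 2 * D.pair β ν := by
          rw [hb4d] at kk1
          have e1 : D.pair β ν * (4*d) = 2 * (2 * D.BF ν (D.coroot δ₀)) := by
            rw [← hBFh]; exact kk1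
          have h0 : (D.pair δ₀ ν - 2 * D.pair β ν) * d = 0 := by
            linear_combination kk2 - e1/2
          have := (mul_eq_zero.mp h0).resolve_right (ne_of_gt hdpos)
          linarith
        linarith [hδ₀ν, hβν, this]
      have hq23 : nq = 2 ∨ nq = 3 := by rw [hP1] at hpq4; omega
      -- δ' = δ₀ - q β ∈ Rpos with coroot δ₀∨ - β∨
      have hδ'R : δ₀ - D.pair δ₀ (D.coroot β) • β ∈ D.R := D.reflect_root_mem β hβR δ₀ hδ₀R
      have hδ'c : D.coroot (δ₀ - D.pair δ₀ (D.coroot β) • β)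
          = D.coroot δ₀ - D.coroot β := by
        rw [D.coroot_reflect hβR hδ₀R, hnp, hP1]
        push_cast; rw [one_smul]
      have hδ'ν : 2 ≤ D.pair (δ₀ - D.pair δ₀ (D.coroot β) • β) ν := by
        rw [map_sub, map_smul]
        simp only [LinearMap.sub_apply, LinearMap.smul_apply, smul_eq_mul]
        rw [hnq]
        have : (nq:ℝ) * D.pair β ν ≤ -nq := by
          have : (2:ℝ) ≤ nq := by exact_mod_cast hq2
          nlinarith [hβν]
        have h2r : (2:ℝ) ≤ (nq:ℝ) := by exact_mod_cast hq2
        linarith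
      have hδ'pos : δ₀ - D.pair δ₀ (D.coroot β) • β ∈ D.Rpos := by
        rcases D.rpos_or_neg hδ'R with h | h
        · exact h
        · exfalso
          have hmem : D.pair (-(δ₀ - D.pair δ₀ (D.coroot β) • β)) ν ≤ -1 := by
            rw [map_neg, LinearMap.neg_apply]; linarith
          have hhtτ := hNmin _ h hmem
          rw [map_neg, map_sub, map_smul] at hhtτ
          simp only [LinearMap.sub_apply, LinearMap.smul_apply, smul_eq_mul] at hhtτ
          -- hhtτ : ht β ≤ -(ht δ₀ - q * ht β)
          have hhtδ : D.ht δ₀ = D.ht β + D.ht (δ₀ - β) := by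
            have := map_sub D.ht δ₀ β
            linarith [this]
          rcases hq23 with h2 | h3
          · rw [hnq, h2] at hhtτ
            push_cast at hhtτ
            linarith [hhtσ, hhtτ, hhtδ]
          · -- q = 3 : need σ₂ = σ - β ∈ Rpos
            have hσβ : 0 < D.pair (δ₀ - β) (D.coroot β) := by
              rw [map_sub, LinearMap.sub_apply, hnq, h3, D.pair_self_eq_two β hβR]
              push_cast; norm_num
            have hσne : δ₀ - β ≠ β := by
              intro heq
              have := hσν
              rw [heq] at this
              linarith
            have hσ₂R : δ₀ - β - β ∈ D.R := D.root_sub_mem hσR hβR hσne hσβ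
            have hσ₂pos : δ₀ - β - β ∈ D.Rpos := by
              rcases D.rpos_or_neg hσ₂R with h' | h'
              · exact h'
              · exfalso
                have hmem2 : D.pair (-(δ₀ - β - β)) ν ≤ -1 := by
                  rw [map_neg, LinearMap.neg_apply, map_sub, LinearMap.sub_apply]
                  linarith
                have := hNmin _ h' hmem2
                have hm1 := map_neg D.ht (δ₀ - β - β)
                have hm2 := map_sub D.ht (δ₀ - β) β
                rw [hm1, hm2] at this
                linarith [hhtσ]
            have hht2 := D.ht_rpos hσ₂pos
            rw [hnq, h3] at hhtτ
            push_cast at hhtτ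
            have hms : D.ht (δ₀ - β - β) = D.ht (δ₀ - β) - D.ht β :=
              map_sub D.ht (δ₀ - β) β
            linarith [hhtτ, hhtδ, hht2, hms]
      refine ⟨β, (δ₀ - D.pair δ₀ (D.coroot β) • β) ::ₘ S.erase δ₀, hβp, ?_, hβν, ?_⟩
      · intro z hz
        rcases Multiset.mem_cons.mp hz with h | h
        · rw [h]; exact hδ'pos
        · exact hS z (Multiset.mem_of_mem_erase h)
      · rw [Multiset.map_cons, Multiset.sum_cons, hδ'c]
        have hLHS : μ - (ν + D.coroot β) = (μ - ν) - D.coroot β := by abel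
        rw [hLHS, hsum, he]
        abel

end RootSystemData
namespace RootSystemData

variable {V V' : Type} [AddCommGroup V] [Module ℝ V] [FiniteDimensional ℝ V]
  [AddCommGroup V'] [Module ℝ V'] [FiniteDimensional ℝ V']
  (D : RootSystemData V V') {α β δ x : V} {μ ν : V'}

lemma BF_add_coroot (hx : x ∈ D.R) (ν : V') :
    D.BF (ν + D.coroot x) (ν + D.coroot x)
      = D.BF ν ν + D.pair x ν * D.BF (D.coroot x) (D.coroot x)
        + D.BF (D.coroot x) (D.coroot x) := by
  have hki := D.KI hx ν
  simp only [map_add, LinearMap.add_apply]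
  rw [D.BF_symm (D.coroot x) ν]
  linarith

lemma ascent (hdom : D.Dominant μ) (ν₀ : V') (B₀ : ℝ) :
    ∀ n : ℕ, ∀ ν : V', ∀ S A : Multiset V,
      ν ∈ D.X → (∀ z ∈ S, z ∈ D.Rpos) → (∀ z ∈ A, z ∈ D.Rpos) →
      (μ - ν = (S.map D.coroot).sum) → (ν₀ + (A.map D.coroot).sum = ν) →
      (D.BF ν ν ≤ B₀) →
      (((D.Rpos.card : ℝ) + B₀)/2 ≤ D.FL ν + 2*n) →
      ∃ (lam : V') (S' A' : Multiset V), lam ∈ D.X ∧ (∀ z ∈ S', z ∈ D.Rpos) ∧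
        (∀ z ∈ A', z ∈ D.Rpos) ∧ (μ - lam = (S'.map D.coroot).sum) ∧
        (ν₀ + (A'.map D.coroot).sum = lam) ∧ D.BF lam lam ≤ B₀ ∧ D.Dominant lam := by
  intro n
  induction n with
  | zero =>
      intro ν S A hν hS hA hsum hAsum hB hF
      by_cases hd : D.Dominant ν
      · exact ⟨ν, S, A, hν, hS, hA, hsum, hAsum, hB, hd⟩
      · exfalso
        obtain ⟨x, S', hx, hS', hxν, hsum'⟩ := D.step hdom hν S hS hsum hd
        have hxR := D.Rpos_subset hx
        have hd4 := D.BF_diag_ge hxR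
        have hBF' : D.BF (ν + D.coroot x) (ν + D.coroot x) ≤ B₀ := by
          rw [D.BF_add_coroot hxR ν]
          nlinarith [hd4, hxν, hB]
        have hFL' : D.FL ν + 2 ≤ D.FL (ν + D.coroot x) := by
          rw [map_add]
          linarith [D.FL_coroot_ge_two hx]
        have hFLle := D.FL_le_of_BF (ν + D.coroot x)
        push_cast at hF
        linarith
  | succ n ih =>
      intro ν S A hν hS hA hsum hAsum hB hF
      by_cases hd : D.Dominant ν
      · exact ⟨ν, S, A, hν, hS, hA, hsum, hAsum, hB, hd⟩
      · obtain ⟨x, S', hx, hS', hxν, hsum'⟩ := D.step hdom hν S hS hsum hd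
        have hxR := D.Rpos_subset hx
        have hd4 := D.BF_diag_ge hxR
        apply ih (ν + D.coroot x) S' (x ::ₘ A)
        · exact AddSubgroup.add_mem _ hν (D.coroot_mem_X x hxR)
        · exact hS'
        · intro z hz
          rcases Multiset.mem_cons.mp hz with h | h
          · rw [h]; exact hx
          · exact hA z h
        · exact hsum'
        · rw [Multiset.map_cons, Multiset.sum_cons]
          rw [← hAsum]; abel
        · rw [D.BF_add_coroot hxR ν]
          nlinarith [hd4, hxν, hB]
        · have hFL' : D.FL ν + 2 ≤ D.FL (ν + D.coroot x) := by
            rw [map_add]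
            linarith [D.FL_coroot_ge_two hx]
          push_cast at hF ⊢
          linarith

lemma sum_mem_Qpos {T : Multiset V} (hT : ∀ z ∈ T, z ∈ D.Rpos) :
    (T.map D.coroot).sum ∈ D.Qpos := by
  induction T using Multiset.induction_on with
  | empty => simp
  | cons a s ih =>
      rw [Multiset.map_cons, Multiset.sum_cons]
      refine AddSubmonoid.add_mem _ ?_ (ih fun z hz => hT z (Multiset.mem_cons_of_mem hz))
      exact AddSubmonoid.subset_closure ⟨a, by
        simpa using hT a (Multiset.mem_cons_self a s), rfl⟩

lemma FL_coroot_sum_nonneg {T : Multiset V} (hT : ∀ z ∈ T, z ∈ D.Rpos) :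
    0 ≤ D.FL ((T.map D.coroot).sum) := by
  induction T using Multiset.induction_on with
  | empty => simp
  | cons a s ih =>
      rw [Multiset.map_cons, Multiset.sum_cons, map_add]
      have h1 := D.FL_coroot_ge_two (hT a (Multiset.mem_cons_self a s))
      have h2 := ih (fun z hz => hT z (Multiset.mem_cons_of_mem hz))
      linarith

lemma BF_mu_coroot_sum_nonneg (hdom : D.Dominant μ) {T : Multiset V}
    (hT : ∀ z ∈ T, z ∈ D.Rpos) : 0 ≤ D.BF μ ((T.map D.coroot).sum) := by
  induction T using Multiset.induction_on with
  | empty => simp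
  | cons a s ih =>
      rw [Multiset.map_cons, Multiset.sum_cons, map_add]
      have haR := D.Rpos_subset (hT a (Multiset.mem_cons_self a s))
      have hki := D.KI haR μ
      have h1 : 0 ≤ D.BF μ (D.coroot a) := by
        have := hdom a (hT a (Multiset.mem_cons_self a s))
        nlinarith [D.BF_diag_ge haR]
      have h2 := ih (fun z hz => hT z (Multiset.mem_cons_of_mem hz))
      linarith

lemma central (hμX : μ ∈ D.X) (hdom : D.Dominant μ)
    (hmin : ∀ ν' ∈ D.Xplus, ν' ≠ 0 → D.leQ ν' μ → ν' = μ)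
    {γ : V} (hγ : γ ∈ D.R) (h2 : 2 ≤ D.pair γ μ) : μ = D.coroot γ := by
  have hγp : γ ∈ D.Rpos := D.mem_Rpos_of_pos hγ hdom (by linarith)
  have hkiμ := D.KI hγ μ
  have ha4 := D.BF_diag_ge hγ
  have hB₀ : D.BF (μ - D.coroot γ) (μ - D.coroot γ)
      = D.BF μ μ - (D.pair γ μ - 1) * D.BF (D.coroot γ) (D.coroot γ) := by
    simp only [map_sub, LinearMap.sub_apply]
    rw [D.BF_symm (D.coroot γ) μ]
    linarith
  have hν₀X : μ - D.coroot γ ∈ D.X := AddSubgroup.sub_mem _ hμX (D.coroot_mem_X γ hγ)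
  obtain ⟨nn, hnn⟩ := exists_nat_ge
    ((((D.Rpos.card : ℝ) + D.BF (μ - D.coroot γ) (μ - D.coroot γ))/2
      - D.FL (μ - D.coroot γ))/2)
  obtain ⟨lam, S', A', hlX, hS', hA', hlsum, hlA, hlB, hldom⟩ :=
    D.ascent hdom (μ - D.coroot γ) (D.BF (μ - D.coroot γ) (μ - D.coroot γ)) nn
      (μ - D.coroot γ) {γ} 0 hν₀X
      (by intro z hz; rw [Multiset.mem_singleton.mp hz]; exact hγp)
      (by intro z hz; simp at hz)
      (by simp)
      (by simp)
      le_rfl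
      (by
        have h2nn : (((D.Rpos.card : ℝ) + D.BF (μ - D.coroot γ) (μ - D.coroot γ))/2
            - D.FL (μ - D.coroot γ))/2 ≤ (nn:ℝ) := hnn
        linarith)
  by_cases hl0 : lam = 0
  · -- coroot γ - μ = Σ_{A'}
    rw [hl0] at hlA
    have hkey : D.coroot γ - μ = ((A'.map D.coroot).sum) := by
      have h' : (A'.map D.coroot).sum = -(μ - D.coroot γ) := by
        rw [eq_neg_iff_add_eq_zero, add_comm]; exact hlA
      rw [h']; abel
    have hBμ : 0 ≤ D.BF μ (D.coroot γ - μ) := by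
      rw [hkey]; exact D.BF_mu_coroot_sum_nonneg hdom hA'
    have hBs : 0 ≤ D.BF (D.coroot γ - μ) (D.coroot γ - μ) := D.BF_self_nonneg _
    have hexp1 : D.BF μ (D.coroot γ - μ) = D.BF μ (D.coroot γ) - D.BF μ μ := by
      rw [map_sub]
    have hexp2 : D.BF (D.coroot γ - μ) (D.coroot γ - μ)
        = D.BF (D.coroot γ) (D.coroot γ) - 2 * D.BF μ (D.coroot γ) + D.BF μ μ := by
      simp only [map_sub, LinearMap.sub_apply]
      rw [D.BF_symm μ (D.coroot γ)]
      linarith [D.BF_symm (D.coroot γ) μ]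
    -- c ≤ 2 hence c = 2 and radical
    have hc2 : D.pair γ μ = 2 := by nlinarith [hkiμ, ha4, hBμ, hBs, hexp1, hexp2, h2]
    have hzero : D.BF (D.coroot γ - μ) (D.coroot γ - μ) = 0 := by
      nlinarith [hkiμ, ha4, hBμ, hBs, hexp1, hexp2, hc2]
    have hFL0 : D.FL (D.coroot γ - μ) = 0 :=
      D.FL_zero_of_radical (fun δ hδ => D.BF_radical hzero hδ)
    -- A' must be empty
    rcases Multiset.empty_or_exists_mem A' with hAe | ⟨a, haA⟩
    · rw [hAe] at hkey
      simp only [Multiset.map_zero, Multiset.sum_zero] at hkey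
      exact (sub_eq_zero.mp hkey).symm
    · exfalso
      have hsum2 : 2 ≤ D.FL ((A'.map D.coroot).sum) := by
        have hc := Multiset.cons_erase haA
        rw [← hc, Multiset.map_cons, Multiset.sum_cons, map_add]
        have h1 := D.FL_coroot_ge_two (hA' a haA)
        have h2 := D.FL_coroot_sum_nonneg (T := A'.erase a)
          (fun z hz => hA' z (Multiset.mem_of_mem_erase hz))
        linarith
      rw [← hkey, hFL0] at hsum2
      linarith
  · have hlam := hmin lam ⟨hlX, hldom⟩ hl0 (by
      rw [leQ]
      rw [hlsum]
      exact D.sum_mem_Qpos hS')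
    rw [hlam] at hlB
    rw [hB₀] at hlB
    nlinarith [ha4, h2, hlB]

end RootSystemData
namespace RootSystemData

variable {V V' : Type} [AddCommGroup V] [Module ℝ V] [FiniteDimensional ℝ V]
  [AddCommGroup V'] [Module ℝ V'] [FiniteDimensional ℝ V']

/-- Chains of linked roots of length `n` from `z` to `t`. -/
def chainTo (D : RootSystemData V V') (t : V) : ℕ → V → Prop
  | 0, z => z = t
  | (n+1), z => ∃ y, D.Linked z y ∧ D.chainTo t n y

/-- Chains of linked roots, orthogonal to `μ` until the last element. -/
def reachO (D : RootSystemData V V') (μ : V') : ℕ → V → Prop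
  | 0, z => z ∈ D.R ∧ D.pair z μ ≠ 0
  | (n+1), z => z ∈ D.R ∧ D.pair z μ = 0 ∧ ∃ y, D.Linked z y ∧ D.reachO μ n y

variable (D : RootSystemData V V') {α β δ x z y γ : V} {μ ν : V'}

lemma linked_symm (h : D.Linked α β) : D.Linked β α :=
  ⟨h.2.1, h.1, D.SC_ne h.1 h.2.1 h.2.2⟩

lemma chain_append {y a : V} (hl : D.Linked y a) :
    ∀ n, ∀ s, D.chainTo y n s → D.chainTo a (n+1) s := by
  intro n
  induction n with
  | zero =>
      intro s hc
      rw [chainTo] at hc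
      subst hc
      exact ⟨a, hl, rfl⟩
  | succ n ih =>
      rintro s ⟨w, hw, hcw⟩
      exact ⟨w, hw, ih w hcw⟩

lemma chain_symm {b : V} : ∀ n, ∀ a, D.chainTo b n a → D.chainTo a n b := by
  intro n
  induction n with
  | zero => intro a h; rw [chainTo] at h ⊢; exact h.symm
  | succ n ih =>
      rintro a ⟨y, hy, hc⟩
      exact D.chain_append (D.linked_symm hy) n b (ih y hc)

lemma chain_trans {b c : V} : ∀ n m, ∀ a, D.chainTo b n a → D.chainTo c m b →
    D.chainTo c (n+m) a := by
  intro n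
  induction n with
  | zero =>
      intro m a h1 h2
      rw [chainTo] at h1
      rw [Nat.zero_add, h1]
      exact h2
  | succ n ih =>
      rintro m a ⟨y, hy, hc⟩ h2
      rw [Nat.succ_add]
      exact ⟨y, hy, ih m y hc h2⟩

lemma chain_of_same {α γ : V} (h : D.SameComponent α γ) : ∃ n, D.chainTo γ n α := by
  induction h with
  | rel a b hab => exact ⟨1, b, hab, rfl⟩
  | refl a => exact ⟨0, rfl⟩
  | symm a b _ ih =>
      obtain ⟨n, hc⟩ := ih
      exact ⟨n, D.chain_symm n a hc⟩
  | trans a b c _ _ ih1 ih2 =>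
      obtain ⟨n, h1⟩ := ih1
      obtain ⟨m, h2⟩ := ih2
      exact ⟨n + m, D.chain_trans n m a h1 h2⟩

end RootSystemData
namespace RootSystemData

variable {V V' : Type} [AddCommGroup V] [Module ℝ V] [FiniteDimensional ℝ V]
  [AddCommGroup V'] [Module ℝ V'] [FiniteDimensional ℝ V']
  (D : RootSystemData V V') {z y γ : V} {μ : V'}

lemma reachO_mem {n : ℕ} (h : D.reachO μ n z) : z ∈ D.R := by
  cases n <;> exact h.1

section Glemmas

variable (hμX : μ ∈ D.X) (hdom : D.Dominant μ)
  (hmin : ∀ ν' ∈ D.Xplus, ν' ≠ 0 → D.leQ ν' μ → ν' = μ)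
  (hγ : γ ∈ D.R) (hμc : μ = D.coroot γ)

include hμX hdom hmin hγ hμc

lemma uniq (hz : z ∈ D.R) (h2z : 2 ≤ D.pair z μ) : z = γ := by
  have h1 := D.central hμX hdom hmin hz h2z
  exact D.coroot_inj hz hγ (by rw [← h1, ← hμc])

omit hmin in
lemma pairγ2 : D.pair γ μ = 2 := by rw [hμc]; exact D.pair_self_eq_two γ hγ

omit hmin in
lemma GE (hz : z ∈ D.R) (h1 : D.pair z μ = 1) : z ∈ D.Rpos ∧ γ - z ∈ D.Rpos := by
  have hγ2 := D.pairγ2 hμX hdom hγ hμc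
  have hzp : z ∈ D.Rpos := D.mem_Rpos_of_pos hz hdom (by rw [h1]; norm_num)
  have hne : z ≠ γ := by
    intro h; rw [h, hγ2] at h1; norm_num at h1
  have hpos : 0 < D.pair z (D.coroot γ) := by rw [← hμc, h1]; norm_num
  have hzg : z - γ ∈ D.R := D.root_sub_mem hz hγ hne hpos
  have hm1 : D.pair (z - γ) μ < 0 := by
    rw [map_sub, LinearMap.sub_apply, h1, hγ2]; norm_num
  have := D.neg_mem_Rpos_of_neg hzg hdom hm1
  rw [neg_sub] at this
  exact ⟨hzp, this⟩

lemma GD (hz : z ∈ D.R) (hne : D.pair z μ ≠ 0) :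
    γ - z ∈ AddSubmonoid.closure (D.Δ : Set V) := by
  have hγ2 := D.pairγ2 hμX hdom hγ hμc
  have hγp : γ ∈ D.Rpos := D.mem_Rpos_of_pos hγ hdom (by rw [hγ2]; norm_num)
  have hγc : γ ∈ AddSubmonoid.closure (D.Δ : Set V) := (D.mem_Rpos.mp hγp).2
  obtain ⟨n, hn⟩ := D.pair_X_int z hz μ hμX
  have hn0 : n ≠ 0 := by
    intro h; rw [h] at hn; exact hne (by rw [hn]; norm_num)
  by_cases h2z : 2 ≤ n
  · have : z = γ := D.uniq hμX hdom hmin hγ hμc hz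
      (by rw [hn]; exact_mod_cast h2z)
    rw [this, sub_self]
    exact AddSubmonoid.zero_mem _
  by_cases h1z : n = 1
  · have := (D.GE hμX hdom hγ hμc hz (by rw [hn, h1z]; norm_num)).2
    exact (D.mem_Rpos.mp this).2
  by_cases hm1 : n = -1
  · have hnz := D.neg_mem z hz
    have h1' : D.pair (-z) μ = 1 := by
      rw [map_neg, LinearMap.neg_apply, hn, hm1]; norm_num
    obtain ⟨hp1, hp2⟩ := D.GE hμX hdom hγ hμc hnz h1'
    have hid : γ - z = (γ - -z) + (-z) + (-z) := by abel
    rw [hid]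
    exact AddSubmonoid.add_mem _
      (AddSubmonoid.add_mem _ (D.mem_Rpos.mp hp2).2 (D.mem_Rpos.mp hp1).2)
      (D.mem_Rpos.mp hp1).2
  · have hle : 2 ≤ -n := by omega
    have hzeq : -z = γ := by
      refine D.uniq hμX hdom hmin hγ hμc (D.neg_mem z hz) ?_
      rw [map_neg, LinearMap.neg_apply, hn]
      have h2r : (2:ℝ) ≤ -(n:ℝ) := by exact_mod_cast hle
      linarith
    have hzz : z = -γ := by rw [← hzeq, neg_neg]
    rw [hzz]
    have hid : γ - -γ = γ + γ := by abel
    rw [hid]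
    exact AddSubmonoid.add_mem _ hγc hγc

lemma GCpos (hz : z ∈ D.R) (h0 : D.pair z μ = 0) (hy : y ∈ D.R)
    (hzy : D.pair z (D.coroot y) ≠ 0) (hyμ : 0 < D.pair y μ) :
    γ - z ∈ AddSubmonoid.closure (D.Δ : Set V) := by
  have hγ2 := D.pairγ2 hμX hdom hγ hμc
  have hy1 : D.pair y μ = 1 := by
    obtain ⟨m, hm⟩ := D.pair_X_int y hy μ hμX
    have hm1 : 1 ≤ m := by
      have : (0:ℝ) < m := by rw [← hm]; exact hyμ
      exact_mod_cast this
    by_cases h2m : 2 ≤ m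
    · exfalso
      have hyγ : y = γ := D.uniq hμX hdom hmin hγ hμc hy (by rw [hm]; exact_mod_cast h2m)
      rw [hyγ, ← hμc] at hzy
      exact hzy h0
    · have : m = 1 := by omega
      rw [hm, this]; norm_num
  obtain ⟨hyp, hyω⟩ := D.GE hμX hdom hγ hμc hy hy1
  rcases lt_or_gt_of_ne hzy with hneg | hpos
  · have hzny : z ≠ -y := by
      intro h
      rw [h, map_neg, LinearMap.neg_apply, hy1] at h0
      norm_num at h0
    have hx : z + y ∈ D.R := D.root_add_mem hz hy hzny hneg
    have hxμ : D.pair (z + y) μ = 1 := by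
      rw [map_add, LinearMap.add_apply, h0, hy1]; norm_num
    obtain ⟨-, hgx⟩ := D.GE hμX hdom hγ hμc hx hxμ
    have hid : γ - z = (γ - (z + y)) + y := by abel
    rw [hid]
    exact AddSubmonoid.add_mem _ (D.mem_Rpos.mp hgx).2 (D.mem_Rpos.mp hyp).2
  · have hyz : 0 < D.pair y (D.coroot z) := D.SC_pos hz hy hpos
    have hne : y ≠ z := by
      intro h; rw [h, h0] at hy1; norm_num at hy1
    have hx : y - z ∈ D.R := D.root_sub_mem hy hz hne hyz
    have hxμ : D.pair (y - z) μ = 1 := by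
      rw [map_sub, LinearMap.sub_apply, h0, hy1]; norm_num
    obtain ⟨hxp, -⟩ := D.GE hμX hdom hγ hμc hx hxμ
    have hid : γ - z = (γ - y) + (y - z) := by abel
    rw [hid]
    exact AddSubmonoid.add_mem _ (D.mem_Rpos.mp hyω).2 (D.mem_Rpos.mp hxp).2

lemma GC (hz : z ∈ D.R) (h0 : D.pair z μ = 0) (hy : y ∈ D.R)
    (hzy : D.pair z (D.coroot y) ≠ 0) (hyμ : D.pair y μ ≠ 0) :
    γ - z ∈ AddSubmonoid.closure (D.Δ : Set V) := by
  rcases lt_or_gt_of_ne hyμ with hneg | hpos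
  · have hy' := D.neg_mem y hy
    have hzy' : D.pair z (D.coroot (-y)) ≠ 0 := by
      rw [D.coroot_neg y hy, map_neg]
      simpa using hzy
    have hyμ' : 0 < D.pair (-y) μ := by
      rw [map_neg, LinearMap.neg_apply]; linarith
    exact D.GCpos hμX hdom hmin hγ hμc hz h0 hy' hzy' hyμ'
  · exact D.GCpos hμX hdom hmin hγ hμc hz h0 hy hzy hpos

lemma orth_main : ∀ n : ℕ, ∀ z, D.reachO μ n z →
    γ - z ∈ AddSubmonoid.closure (D.Δ : Set V) := by
  intro n
  induction n using Nat.strong_induction_on with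
  | _ n ih =>
    intro z hr
    match n, hr with
    | 0, ⟨hzR, hzμ⟩ => exact D.GD hμX hdom hmin hγ hμc hzR hzμ
    | (m+1), ⟨hzR, hz0, y, hzy, hry⟩ =>
      match m, hry with
      | 0, ⟨hyR, hyμ⟩ =>
          exact D.GC hμX hdom hmin hγ hμc hzR hz0 hyR hzy.2.2 hyμ
      | (k+1), ⟨hyR, hyμ0, w, hyw, hrw⟩ =>
        have hwR : w ∈ D.R := D.reachO_mem hrw
        by_cases hzw : D.pair z (D.coroot w) ≠ 0
        · exact ih (k+1) (by omega) z ⟨hzR, hz0, w, ⟨hzR, hwR, hzw⟩, hrw⟩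
        · push_neg at hzw
          have hywp : D.pair y (D.coroot w) ≠ 0 := hyw.2.2
          have hzyp : D.pair z (D.coroot y) ≠ 0 := hzy.2.2
          -- r := s_y w
          have hrR : w - D.pair w (D.coroot y) • y ∈ D.R :=
            D.reflect_root_mem y hyR w hwR
          have hrc : D.coroot (w - D.pair w (D.coroot y) • y)
              = D.coroot w - D.pair y (D.coroot w) • D.coroot y :=
            D.coroot_reflect hyR hwR
          have hrμ : D.pair (w - D.pair w (D.coroot y) • y) μ = D.pair w μ := by
            rw [map_sub, map_smul]
            simp only [LinearMap.sub_apply, LinearMap.smul_apply, smul_eq_mul]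
            rw [hyμ0]; ring
          have hzr : D.pair z (D.coroot (w - D.pair w (D.coroot y) • y)) ≠ 0 := by
            rw [hrc, map_sub, map_smul]
            simp only [smul_eq_mul]
            rw [hzw]
            simpa using mul_ne_zero hywp hzyp
          by_cases hwμ : D.pair w μ ≠ 0
          · exact D.GC hμX hdom hmin hγ hμc hzR hz0 hrR hzr (by rw [hrμ]; exact hwμ)
          · push_neg at hwμ
            match k, hrw with
            | 0, ⟨_, hne⟩ => exact absurd hwμ hne
            | (j+1), ⟨hwR', hwμ0', v, hwv, hrv⟩ =>
              have hvR : v ∈ D.R := D.reachO_mem hrv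
              by_cases hyv : D.pair y (D.coroot v) ≠ 0
              · exact ih (j+2) (by omega) z
                  ⟨hzR, hz0, y, hzy, hyR, hyμ0, v, ⟨hyR, hvR, hyv⟩, hrv⟩
              · push_neg at hyv
                have hrv' : D.pair (w - D.pair w (D.coroot y) • y) (D.coroot v) ≠ 0 := by
                  rw [map_sub, map_smul]
                  simp only [LinearMap.sub_apply, LinearMap.smul_apply, smul_eq_mul]
                  rw [hyv]
                  simpa using hwv.2.2
                exact ih (j+2) (by omega) z
                  ⟨hzR, hz0, _, ⟨hzR, hrR, hzr⟩,
                    hrR, by rw [hrμ]; exact hwμ, v, ⟨hrR, hvR, hrv'⟩, hrv⟩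

omit hmin hγ hμc in
lemma reach_of_chain (hγμ : D.pair γ μ ≠ 0) (hγR : γ ∈ D.R) :
    ∀ n, ∀ z, D.chainTo γ n z → ∃ m, D.reachO μ m z := by
  intro n
  induction n with
  | zero =>
      intro z hc
      rw [chainTo] at hc
      subst hc
      exact ⟨0, hγR, hγμ⟩
  | succ n ih =>
      rintro z ⟨y, hzy, hc⟩
      by_cases hz0 : D.pair z μ = 0
      · obtain ⟨m, hm⟩ := ih y hc
        exact ⟨m + 1, hzy.1, hz0, y, hzy, hm⟩
      · exact ⟨0, hzy.1, hz0⟩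

end Glemmas

end RootSystemData
theorem quasiminuscule_root_is_highest {V V' : Type} [AddCommGroup V] [Module ℝ V] [FiniteDimensional ℝ V]
    [AddCommGroup V'] [Module ℝ V'] [FiniteDimensional ℝ V']
    (D : RootSystemData V V')
    (μ : V') (hμ : μ ∈ D.MSet) (γ : V) (hγ : γ ∈ D.R)
    (h2 : 2 ≤ D.pair γ μ) :
    γ ∈ D.Rpos ∧ (∀ α ∈ D.Rpos, 0 ≤ D.pair γ (D.coroot α)) ∧
      ∀ α ∈ D.R, D.SameComponent α γ →
        γ - α ∈ AddSubmonoid.closure (D.Δ : Set V) := by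
  obtain ⟨⟨hμX, hdom⟩, hμ0, hmin⟩ := hμ
  have hμc : μ = D.coroot γ := D.central hμX hdom hmin hγ h2
  have hγ2 : D.pair γ μ = 2 := D.pairγ2 hμX hdom hγ hμc
  refine ⟨D.mem_Rpos_of_pos hγ hdom (by linarith), ?_, ?_⟩
  · intro α hα
    have h0 := hdom α hα
    rw [hμc] at h0
    exact D.SC_nonneg (D.Rpos_subset hα) hγ h0
  · intro α hαR hsame
    obtain ⟨n, hc⟩ := D.chain_of_same hsame
    obtain ⟨m, hr⟩ := D.reach_of_chain hμX hdom (μ := μ) (by rw [hγ2]; norm_num) hγ n α hc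
    exact D.orth_main hμX hdom hmin hγ hμc m α hr

end
end

section
/- Let μ ∈ X∨₊ be nonzero and suppose ⟨α, μ⟩ ∈ {−1, 0, 1} for every root α ∈ R (μ is a minuscule cocharacter). Then μ is a minimal element of X∨₊: there is no ν ∈ X∨₊ with ν ≤ μ and ν ≠ μ. Moreover Ω(μ) = Wμ, the W-orbit of μ. -/
open scoped BigOperators Classical

noncomputable section

namespace RootSystemData

variable {V V' : Type} [AddCommGroup V] [Module ℝ V] [FiniteDimensional ℝ V]
  [AddCommGroup V'] [Module ℝ V'] [FiniteDimensional ℝ V']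
  (D : RootSystemData V V')

lemma reflV_apply (α : V) (hα : α ∈ D.R) (x : V) :
    D.reflV α hα x = x - D.pair x (D.coroot α) • α := by
  rw [reflV, Module.reflection_apply]; rfl

lemma reflV'_apply (α : V) (hα : α ∈ D.R) (y : V') :
    D.reflV' α hα y = y - D.pair α y • D.coroot α := by
  rw [reflV', Module.reflection_apply]

lemma reflV_invol (α : V) (hα : α ∈ D.R) (x : V) :
    D.reflV α hα (D.reflV α hα x) = x :=
  Module.involutive_reflection _ x

lemma reflV'_invol (α : V) (hα : α ∈ D.R) (y : V') :
    D.reflV' α hα (D.reflV' α hα y) = y :=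
  Module.involutive_reflection _ y

lemma reflV_symm (α : V) (hα : α ∈ D.R) : (D.reflV α hα).symm = D.reflV α hα :=
  Module.reflection_symm _

lemma reflV'_symm (α : V) (hα : α ∈ D.R) : (D.reflV' α hα).symm = D.reflV' α hα :=
  Module.reflection_symm _

/-- The generator of the Weyl group attached to a root. -/
def genW (α : V) (hα : α ∈ D.R) : (V ≃ₗ[ℝ] V) × (V' ≃ₗ[ℝ] V') :=
  (D.reflV α hα, D.reflV' α hα)

lemma genW_mem (α : V) (hα : α ∈ D.R) : D.genW α hα ∈ D.weyl :=
  Subgroup.subset_closure ⟨α, hα, rfl⟩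

lemma coroot_mem_Qc (α : V) (hα : α ∈ D.R) : D.coroot α ∈ D.Qc := by
  show _ ∈ AddSubgroup.closure (D.coroot '' (D.R : Set V))
  exact AddSubgroup.subset_closure ⟨α, hα, rfl⟩

lemma coroot_mem_Qpos (α : V) (hα : α ∈ D.Rpos) : D.coroot α ∈ D.Qpos := by
  show _ ∈ AddSubmonoid.closure (D.coroot '' (D.Rpos : Set V))
  exact AddSubmonoid.subset_closure ⟨α, hα, rfl⟩

lemma Qc_le_X : D.Qc ≤ D.X := by
  rw [Qc, AddSubgroup.closure_le]
  rintro v ⟨α, hα, rfl⟩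
  exact D.coroot_mem_X α hα

/-- Master lemma: stability properties of elements of the Weyl group. -/
lemma weyl_props {g : (V ≃ₗ[ℝ] V) × (V' ≃ₗ[ℝ] V')} (hg : g ∈ D.weyl) :
    (∀ x y, D.pair (g.1 x) (g.2 y) = D.pair x y) ∧
    (∀ α ∈ D.R, g.1 α ∈ D.R) ∧ (∀ α ∈ D.R, g.1.symm α ∈ D.R) ∧
    (∀ v ∈ D.coroot '' (D.R : Set V), g.2 v ∈ D.coroot '' (D.R : Set V)) ∧
    (∀ v ∈ D.coroot '' (D.R : Set V), g.2.symm v ∈ D.coroot '' (D.R : Set V)) ∧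
    (∀ x ∈ D.X, g.2 x ∈ D.X) ∧ (∀ x ∈ D.X, g.2.symm x ∈ D.X) ∧
    (∀ x ∈ D.X, g.2 x - x ∈ D.Qc) := by
  induction hg using Subgroup.closure_induction with
  | mem g hgen =>
    obtain ⟨α, hα, rfl⟩ := hgen
    refine ⟨?_, ?_, ?_, ?_, ?_, ?_, ?_, ?_⟩
    · intro x y
      show D.pair (D.reflV α hα x) (D.reflV' α hα y) = D.pair x y
      rw [reflV_apply, reflV'_apply]
      have h2 := D.pair_self_eq_two α hα
      simp only [map_sub, map_smul, LinearMap.sub_apply, LinearMap.smul_apply, smul_eq_mul, h2]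
      ring
    · intro β hβ
      show D.reflV α hα β ∈ D.R
      rw [reflV_apply]; exact D.reflect_root_mem α hα β hβ
    · intro β hβ
      show (D.reflV α hα).symm β ∈ D.R
      rw [reflV_symm, reflV_apply]; exact D.reflect_root_mem α hα β hβ
    · rintro v ⟨β, hβ, rfl⟩
      show D.reflV' α hα (D.coroot β) ∈ _
      rw [reflV'_apply]; exact D.reflect_coroot_mem α hα β hβ
    · rintro v ⟨β, hβ, rfl⟩
      show (D.reflV' α hα).symm (D.coroot β) ∈ _
      rw [reflV'_symm, reflV'_apply]; exact D.reflect_coroot_mem α hα β hβ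
    · intro x hx
      show D.reflV' α hα x ∈ D.X
      rw [reflV'_apply]
      obtain ⟨n, hn⟩ := D.pair_X_int α hα x hx
      rw [hn, Int.cast_smul_eq_zsmul]
      exact sub_mem hx (AddSubgroup.zsmul_mem _ (D.coroot_mem_X α hα) n)
    · intro x hx
      show (D.reflV' α hα).symm x ∈ D.X
      rw [reflV'_symm, reflV'_apply]
      obtain ⟨n, hn⟩ := D.pair_X_int α hα x hx
      rw [hn, Int.cast_smul_eq_zsmul]
      exact sub_mem hx (AddSubgroup.zsmul_mem _ (D.coroot_mem_X α hα) n)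
    · intro x hx
      show D.reflV' α hα x - x ∈ D.Qc
      rw [reflV'_apply]
      obtain ⟨n, hn⟩ := D.pair_X_int α hα x hx
      rw [hn, Int.cast_smul_eq_zsmul, sub_sub_cancel_left]
      exact NegMemClass.neg_mem (AddSubgroup.zsmul_mem _ (D.coroot_mem_Qc α hα) n)
  | one =>
    refine ⟨?_, ?_, ?_, ?_, ?_, ?_, ?_, ?_⟩
    · intro x y; rfl
    · intro α h; exact h
    · intro α h; exact h
    · intro v h; exact h
    · intro v h; exact h
    · intro x h; exact h
    · intro x h; exact h
    · intro x hx; simpa using zero_mem D.Qc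
  | mul g h hgW hhW pg ph =>
    obtain ⟨pg1, pg2, pg3, pg4, pg5, pg6, pg7, pg8⟩ := pg
    obtain ⟨ph1, ph2, ph3, ph4, ph5, ph6, ph7, ph8⟩ := ph
    refine ⟨?_, ?_, ?_, ?_, ?_, ?_, ?_, ?_⟩
    · intro x y; exact (pg1 (h.1 x) (h.2 y)).trans (ph1 x y)
    · intro α hα; exact pg2 _ (ph2 α hα)
    · intro α hα; exact ph3 _ (pg3 α hα)
    · intro v hv; exact pg4 _ (ph4 v hv)
    · intro v hv; exact ph5 _ (pg5 v hv)
    · intro x hx; exact pg6 _ (ph6 x hx)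
    · intro x hx; exact ph7 _ (pg7 x hx)
    · intro x hx
      have : (g * h).2 x - x = (g.2 (h.2 x) - h.2 x) + (h.2 x - x) := by
        show g.2 (h.2 x) - x = _; abel
      rw [this]
      exact add_mem (pg8 _ (ph6 x hx)) (ph8 x hx)
  | inv g hgW pg =>
    obtain ⟨pg1, pg2, pg3, pg4, pg5, pg6, pg7, pg8⟩ := pg
    refine ⟨?_, fun α hα => pg3 α hα, fun α hα => pg2 α hα,
      fun v hv => pg5 v hv, fun v hv => pg4 v hv,
      fun x hx => pg7 x hx, fun x hx => pg6 x hx, ?_⟩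
    · intro x y
      have := pg1 (g.1.symm x) (g.2.symm y)
      simp only [LinearEquiv.apply_symm_apply] at this
      exact this.symm
    · intro x hx
      have : (g⁻¹).2 x - x = -(g.2 (g.2.symm x) - g.2.symm x) := by
        show g.2.symm x - x = _
        rw [LinearEquiv.apply_symm_apply]; abel
      rw [this]
      exact NegMemClass.neg_mem (pg8 _ (pg7 x hx))

end RootSystemData
namespace RootSystemData

variable {V V' : Type} [AddCommGroup V] [Module ℝ V] [FiniteDimensional ℝ V]
  [AddCommGroup V'] [Module ℝ V'] [FiniteDimensional ℝ V']
  (D : RootSystemData V V')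

lemma wpair {g : (V ≃ₗ[ℝ] V) × (V' ≃ₗ[ℝ] V')} (hg : g ∈ D.weyl) (γ : V) (x : V') :
    D.pair γ (g.2 x) = D.pair (g.1.symm γ) x := by
  have := (D.weyl_props hg).1 (g.1.symm γ) x
  rwa [LinearEquiv.apply_symm_apply] at this

lemma wroot {g : (V ≃ₗ[ℝ] V) × (V' ≃ₗ[ℝ] V')} (hg : g ∈ D.weyl) {α : V} (hα : α ∈ D.R) :
    g.1 α ∈ D.R := (D.weyl_props hg).2.1 α hα

lemma wroot_symm {g : (V ≃ₗ[ℝ] V) × (V' ≃ₗ[ℝ] V')} (hg : g ∈ D.weyl) {α : V} (hα : α ∈ D.R) :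
    g.1.symm α ∈ D.R := (D.weyl_props hg).2.2.1 α hα

lemma wF {g : (V ≃ₗ[ℝ] V) × (V' ≃ₗ[ℝ] V')} (hg : g ∈ D.weyl) {v : V'}
    (hv : v ∈ D.coroot '' (D.R : Set V)) : g.2 v ∈ D.coroot '' (D.R : Set V) :=
  (D.weyl_props hg).2.2.2.1 v hv

lemma wX {g : (V ≃ₗ[ℝ] V) × (V' ≃ₗ[ℝ] V')} (hg : g ∈ D.weyl) {x : V'} (hx : x ∈ D.X) :
    g.2 x ∈ D.X := (D.weyl_props hg).2.2.2.2.2.1 x hx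

lemma wQc {g : (V ≃ₗ[ℝ] V) × (V' ≃ₗ[ℝ] V')} (hg : g ∈ D.weyl) {x : V'} (hx : x ∈ D.X) :
    g.2 x - x ∈ D.Qc := (D.weyl_props hg).2.2.2.2.2.2.2 x hx

/-- Bounded pairing against all roots (minuscule-type condition). -/
def Mn (x : V') : Prop := ∀ β ∈ D.R, |D.pair β x| ≤ 1

lemma Mn_weyl {g : (V ≃ₗ[ℝ] V) × (V' ≃ₗ[ℝ] V')} (hg : g ∈ D.weyl) {x : V'} (hx : D.Mn x) :
    D.Mn (g.2 x) := by
  intro β hβ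
  rw [D.wpair hg]
  exact hx _ (D.wroot_symm hg hβ)

lemma indep_apply (f : V → ℝ) (hf : ∑ δ ∈ D.Δ, f δ • δ = 0) : ∀ δ ∈ D.Δ, f δ = 0 := by
  have li := D.base_indep
  have li2 : LinearIndependent ℝ (fun a : {x // x ∈ D.Δ} => (a : V)) := by
    have h := li.comp (Equiv.subtypeEquivRight (fun x => (Finset.mem_coe (s := D.Δ)).symm))
      (Equiv.injective _)
    convert h using 2
    rfl
  rw [Fintype.linearIndependent_iff] at li2
  intro δ hδ
  have hsum : ∑ a : {x // x ∈ D.Δ}, f a • (a : V) = 0 := by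
    rw [Finset.univ_eq_attach, Finset.sum_attach D.Δ (fun δ => f δ • δ)]
    exact hf
  exact li2 (fun a => f a) hsum ⟨δ, hδ⟩

lemma exp_coeff {v : V} (hv : v ∈ AddSubmonoid.closure (D.Δ : Set V)) :
    ∃ c : V → ℕ, v = ∑ δ ∈ D.Δ, (c δ : ℝ) • δ := by
  induction hv using AddSubmonoid.closure_induction with
  | mem x hx =>
    refine ⟨fun w => if w = x then 1 else 0, ?_⟩
    have hx' : x ∈ D.Δ := Finset.mem_coe.mp hx
    have : ∀ δ ∈ D.Δ, ((if δ = x then (1 : ℕ) else 0 : ℕ) : ℝ) • δ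
        = if δ = x then δ else 0 := by
      intro δ _; split <;> simp
    rw [Finset.sum_congr rfl this, Finset.sum_ite_eq' D.Δ x (fun δ => δ), if_pos hx']
  | zero => exact ⟨fun _ => 0, by simp⟩
  | add x y hx hy ihx ihy =>
    obtain ⟨c₁, hc₁⟩ := ihx
    obtain ⟨c₂, hc₂⟩ := ihy
    refine ⟨fun w => c₁ w + c₂ w, ?_⟩
    rw [hc₁, hc₂, ← Finset.sum_add_distrib]
    congr 1; ext δ
    push_cast
    rw [add_smul]

lemma Rpos_subset_R : D.Rpos ⊆ D.R := Finset.filter_subset _ _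

lemma mem_Rpos_closure {γ : V} (hγ : γ ∈ D.Rpos) : γ ∈ AddSubmonoid.closure (D.Δ : Set V) :=
  (Finset.mem_filter.mp hγ).2

lemma not_neg_mem_Rpos {γ : V} (hγ : γ ∈ D.Rpos) : -γ ∉ D.Rpos := by
  intro h
  obtain ⟨c, hc⟩ := D.exp_coeff (D.mem_Rpos_closure hγ)
  obtain ⟨c', hc'⟩ := D.exp_coeff (D.mem_Rpos_closure h)
  have hz : ∑ δ ∈ D.Δ, ((c δ : ℝ) + (c' δ : ℝ)) • δ = 0 := by
    have h1 : ∑ δ ∈ D.Δ, ((c δ : ℝ) + (c' δ : ℝ)) • δ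
        = (∑ δ ∈ D.Δ, (c δ : ℝ) • δ) + ∑ δ ∈ D.Δ, (c' δ : ℝ) • δ := by
      rw [← Finset.sum_add_distrib]
      exact Finset.sum_congr rfl fun δ _ => add_smul _ _ _
    rw [h1, ← hc, ← hc']; abel
  have h0 := D.indep_apply _ hz
  have hγ0 : γ = 0 := by
    rw [hc]
    apply Finset.sum_eq_zero
    intro δ hδ
    have := h0 δ hδ
    have hcδ : (c δ : ℝ) = 0 := by
      have h1 : (0:ℝ) ≤ (c δ : ℝ) := Nat.cast_nonneg _
      have h2 : (0:ℝ) ≤ (c' δ : ℝ) := Nat.cast_nonneg _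
      linarith
    rw [hcδ, zero_smul]
  exact D.root_ne_zero γ (D.Rpos_subset_R hγ) hγ0

end RootSystemData
namespace RootSystemData

variable {V V' : Type} [AddCommGroup V] [Module ℝ V] [FiniteDimensional ℝ V]
  [AddCommGroup V'] [Module ℝ V'] [FiniteDimensional ℝ V']
  (D : RootSystemData V V')

lemma R_dichot {α : V} (hα : α ∈ D.R) : α ∈ D.Rpos ∨ -α ∈ D.Rpos := by
  rcases D.base_generates α hα with h | h
  · exact Or.inl (Finset.mem_filter.mpr ⟨hα, h⟩)
  · exact Or.inr (Finset.mem_filter.mpr ⟨D.neg_mem α hα, h⟩)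

/-- The "height" linear functional on `V'`: sum of pairings with all positive roots. -/
def Lf : V' →ₗ[ℝ] ℝ := ∑ β ∈ D.Rpos, D.pair β

lemma Lf_apply (x : V') : D.Lf x = ∑ β ∈ D.Rpos, D.pair β x := by
  rw [Lf]; simp

/-- A canonical invariant positive semidefinite form. -/
def Bf : V' →ₗ[ℝ] V' →ₗ[ℝ] ℝ := ∑ β ∈ D.R, (D.pair β).smulRight (D.pair β)

lemma Bf_apply (x y : V') : D.Bf x y = ∑ β ∈ D.R, D.pair β x * D.pair β y := by
  rw [Bf]; simp [smul_eq_mul]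

lemma Bf_comm (x y : V') : D.Bf x y = D.Bf y x := by
  simp only [Bf_apply]; exact Finset.sum_congr rfl fun β _ => mul_comm _ _

lemma Bf_self_nonneg (x : V') : 0 ≤ D.Bf x x := by
  rw [Bf_apply]
  exact Finset.sum_nonneg fun β _ => mul_self_nonneg _

lemma Bf_inv {g : (V ≃ₗ[ℝ] V) × (V' ≃ₗ[ℝ] V')} (hg : g ∈ D.weyl) (x y : V') :
    D.Bf (g.2 x) (g.2 y) = D.Bf x y := by
  simp only [Bf_apply]
  refine Finset.sum_nbij' (fun β => g.1.symm β) (fun β => g.1 β) ?_ ?_ ?_ ?_ ?_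
  · intro β hβ; exact D.wroot_symm hg hβ
  · intro β hβ; exact D.wroot hg hβ
  · intro β _; exact g.1.apply_symm_apply β
  · intro β _; exact g.1.symm_apply_apply β
  · intro β _; rw [D.wpair hg, D.wpair hg]

lemma Bf_CS (x y : V') : (D.Bf x y) ^ 2 ≤ D.Bf x x * D.Bf y y := by
  simp only [Bf_apply]
  have h := Finset.sum_mul_sq_le_sq_mul_sq D.R (fun β => D.pair β x) (fun β => D.pair β y)
  calc (∑ β ∈ D.R, D.pair β x * D.pair β y) ^ 2
      ≤ (∑ β ∈ D.R, D.pair β x ^ 2) * ∑ β ∈ D.R, D.pair β y ^ 2 := h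
    _ = (∑ β ∈ D.R, D.pair β x * D.pair β x) * ∑ β ∈ D.R, D.pair β y * D.pair β y := by
        simp [pow_two]

lemma Bf_transport {γ : V} (hγ : γ ∈ D.R) (x : V') :
    2 * D.Bf x (D.coroot γ) = D.pair γ x * D.Bf (D.coroot γ) (D.coroot γ) := by
  have hinv := D.Bf_inv (D.genW_mem γ hγ) x (D.coroot γ)
  have hrefl : (D.genW γ hγ).2 (D.coroot γ) = -(D.coroot γ) := by
    show D.reflV' γ hγ (D.coroot γ) = _
    rw [reflV'_apply, D.pair_self_eq_two γ hγ, two_smul]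
    abel
  have hx : (D.genW γ hγ).2 x = x - D.pair γ x • D.coroot γ := D.reflV'_apply γ hγ x
  rw [hx, hrefl] at hinv
  simp only [map_sub, map_smul, map_neg, LinearMap.sub_apply, LinearMap.smul_apply,
    LinearMap.neg_apply, smul_eq_mul] at hinv
  linarith [hinv]

/-- A multiset of coroots of positive roots. -/
def IsPosRep (s : Multiset V') : Prop := ∀ v ∈ s, ∃ γ ∈ D.Rpos, D.coroot γ = v

lemma Qpos_rep {x : V'} (hx : x ∈ D.Qpos) :
    ∃ s : Multiset V', D.IsPosRep s ∧ s.sum = x := by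
  induction hx using AddSubmonoid.closure_induction with
  | mem v hv =>
    obtain ⟨γ, hγ, rfl⟩ := hv
    exact ⟨{D.coroot γ}, fun w hw => ⟨γ, Finset.mem_coe.mp hγ, by
      rw [Multiset.mem_singleton] at hw; rw [hw]⟩, by simp⟩
  | zero => exact ⟨0, fun v hv => absurd hv (Multiset.notMem_zero v), rfl⟩
  | add a b ha hb iha ihb =>
    obtain ⟨s, hs, hssum⟩ := iha
    obtain ⟨t, ht, htsum⟩ := ihb
    refine ⟨s + t, ?_, by rw [Multiset.sum_add, hssum, htsum]⟩
    intro v hv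
    rcases Multiset.mem_add.mp hv with h | h
    · exact hs v h
    · exact ht v h

lemma rep_sum_mem {s : Multiset V'} (hs : D.IsPosRep s) : s.sum ∈ D.Qpos := by
  induction s using Multiset.induction with
  | empty => simpa using zero_mem D.Qpos
  | cons v t ih =>
    rw [Multiset.sum_cons]
    obtain ⟨γ, hγ, rfl⟩ := hs v (Multiset.mem_cons_self v t)
    exact add_mem (D.coroot_mem_Qpos γ hγ) (ih fun w hw => hs w (Multiset.mem_cons_of_mem hw))

lemma Qc_rep {x : V'} (hx : x ∈ D.Qc) :
    ∃ s t : Multiset V', D.IsPosRep s ∧ D.IsPosRep t ∧ x = s.sum - t.sum := by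
  induction hx using AddSubgroup.closure_induction with
  | mem v hv =>
    obtain ⟨α, hα, rfl⟩ := hv
    rcases D.R_dichot (Finset.mem_coe.mp hα) with h | h
    · refine ⟨{D.coroot α}, 0, fun w hw => ⟨α, h, by
        rw [Multiset.mem_singleton] at hw; rw [hw]⟩,
        fun w hw => absurd hw (Multiset.notMem_zero w), by simp⟩
    · refine ⟨0, {D.coroot (-α)}, fun w hw => absurd hw (Multiset.notMem_zero w),
        fun w hw => ⟨-α, h, by rw [Multiset.mem_singleton] at hw; rw [hw]⟩, ?_⟩
      rw [D.coroot_neg α (Finset.mem_coe.mp hα)]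
      simp
  | zero => exact ⟨0, 0, fun v hv => absurd hv (Multiset.notMem_zero v),
      fun v hv => absurd hv (Multiset.notMem_zero v), by simp⟩
  | add a b ha hb iha ihb =>
    obtain ⟨s, t, hs, ht, hab⟩ := iha
    obtain ⟨s', t', hs', ht', hab'⟩ := ihb
    refine ⟨s + s', t + t', ?_, ?_, ?_⟩
    · intro v hv; rcases Multiset.mem_add.mp hv with h | h
      · exact hs v h
      · exact hs' v h
    · intro v hv; rcases Multiset.mem_add.mp hv with h | h
      · exact ht v h
      · exact ht' v h
    · rw [Multiset.sum_add, Multiset.sum_add, hab, hab']; abel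
  | neg a ha iha =>
    obtain ⟨s, t, hs, ht, hab⟩ := iha
    exact ⟨t, s, ht, hs, by rw [hab]; abel⟩

end RootSystemData
namespace RootSystemData

variable {V V' : Type} [AddCommGroup V] [Module ℝ V] [FiniteDimensional ℝ V]
  [AddCommGroup V'] [Module ℝ V'] [FiniteDimensional ℝ V']
  (D : RootSystemData V V')

lemma Lf_coroot_ge_two {γ : V} (hγ : γ ∈ D.Rpos) : 2 ≤ D.Lf (D.coroot γ) := by
  classical
  have hγR : γ ∈ D.R := D.Rpos_subset_R hγ
  set σ := D.reflV γ hγR with hσ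
  set A : Finset V := D.Rpos.filter (fun δ => ¬ (σ δ ∈ D.Rpos)) with hA
  set K : ℝ := D.Lf (D.coroot γ) with hK
  -- the reflection of the sum of positive roots
  have hsum1 : ∑ δ ∈ D.Rpos, σ δ = (∑ δ ∈ D.Rpos, δ) - K • γ := by
    rw [← map_sum σ _ D.Rpos]
    rw [hσ, reflV_apply]
    congr 1
    rw [hK, Lf_apply]
    congr 1
    rw [map_sum]
    simp
  -- roots not moved out of Rpos
  have hmemA : ∀ δ ∈ A, δ ∈ D.Rpos ∧ σ δ ∉ D.Rpos := by
    intro δ hδ; exact ⟨(Finset.mem_filter.mp hδ).1, (Finset.mem_filter.mp hδ).2⟩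
  have hσR : ∀ δ ∈ D.Rpos, σ δ ∈ D.R := by
    intro δ hδ
    rw [hσ, reflV_apply]
    exact D.reflect_root_mem γ hγR δ (D.Rpos_subset_R hδ)
  have h3 : ∑ δ ∈ D.Rpos.filter (fun δ => σ δ ∈ D.Rpos), σ δ
      = ∑ δ ∈ D.Rpos.filter (fun δ => σ δ ∈ D.Rpos), δ := by
    refine Finset.sum_nbij' (fun δ => σ δ) (fun δ => σ δ) ?_ ?_ ?_ ?_ ?_
    · intro δ hδ
      obtain ⟨h1, h2⟩ := Finset.mem_filter.mp hδ
      refine Finset.mem_filter.mpr ⟨h2, ?_⟩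
      rw [D.reflV_invol γ hγR δ]
      exact h1
    · intro δ hδ
      obtain ⟨h1, h2⟩ := Finset.mem_filter.mp hδ
      refine Finset.mem_filter.mpr ⟨h2, ?_⟩
      rw [D.reflV_invol γ hγR δ]
      exact h1
    · intro δ _; exact D.reflV_invol γ hγR δ
    · intro δ _; exact D.reflV_invol γ hγR δ
    · intro δ _; rfl
  have h4 : ∑ δ ∈ A, σ δ = - ∑ δ ∈ A, δ := by
    rw [← Finset.sum_neg_distrib]
    refine Finset.sum_nbij' (fun δ => -σ δ) (fun δ => -σ δ) ?_ ?_ ?_ ?_ ?_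
    · intro δ hδ
      obtain ⟨h1, h2⟩ := hmemA δ hδ
      have hin : -σ δ ∈ D.Rpos := by
        rcases D.R_dichot (hσR δ h1) with h | h
        · exact absurd h h2
        · exact h
      refine Finset.mem_filter.mpr ⟨hin, ?_⟩
      rw [map_neg, D.reflV_invol γ hγR δ]
      exact D.not_neg_mem_Rpos h1
    · intro δ hδ
      obtain ⟨h1, h2⟩ := hmemA δ hδ
      have hin : -σ δ ∈ D.Rpos := by
        rcases D.R_dichot (hσR δ h1) with h | h
        · exact absurd h h2
        · exact h
      refine Finset.mem_filter.mpr ⟨hin, ?_⟩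
      rw [map_neg, D.reflV_invol γ hγR δ]
      exact D.not_neg_mem_Rpos h1
    · intro δ _; show -σ (-σ δ) = δ; rw [map_neg, D.reflV_invol γ hγR δ, neg_neg]
    · intro δ _; show -σ (-σ δ) = δ; rw [map_neg, D.reflV_invol γ hγR δ, neg_neg]
    · intro δ _; show σ δ = -(-σ δ); rw [neg_neg]
  have hsplit := Finset.sum_filter_add_sum_filter_not D.Rpos (fun δ => σ δ ∈ D.Rpos)
      (fun δ => σ δ)
  have hsplit2 := Finset.sum_filter_add_sum_filter_not D.Rpos (fun δ => σ δ ∈ D.Rpos)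
      (fun δ => δ)
  have hKγ : K • γ = (2:ℝ) • ∑ δ ∈ A, δ := by
    have e1 : (∑ δ ∈ D.Rpos, δ) - K • γ
        = (∑ δ ∈ D.Rpos, δ) - (∑ δ ∈ A, δ) - ∑ δ ∈ A, δ := by
      rw [← hsum1, ← hsplit, h3, h4, ← hsplit2]
      abel
    have h2 : K • γ = (∑ δ ∈ D.Rpos, δ)
        - ((∑ δ ∈ D.Rpos, δ) - (∑ δ ∈ A, δ) - ∑ δ ∈ A, δ) := by
      rw [← e1]; abel
    rw [h2, two_smul]; abel
  -- γ belongs to A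
  have hγA : γ ∈ A := by
    refine Finset.mem_filter.mpr ⟨hγ, ?_⟩
    have : σ γ = -γ := by
      rw [hσ, reflV_apply, D.pair_self_eq_two γ hγR, two_smul]
      abel
    rw [this]
    exact D.not_neg_mem_Rpos hγ
  -- coefficient extraction
  have hAex : ∀ δ' : V, ∃ c : V → ℕ, δ' ∈ A → δ' = ∑ δ ∈ D.Δ, (c δ : ℝ) • δ := by
    intro δ'
    by_cases h : δ' ∈ A
    · obtain ⟨c, hc⟩ := D.exp_coeff (D.mem_Rpos_closure (hmemA δ' h).1)
      exact ⟨c, fun _ => hc⟩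
    · exact ⟨0, fun hh => absurd hh h⟩
  choose co hco using hAex
  have hRHS : ∑ δ' ∈ A, δ' = ∑ δ ∈ D.Δ, (∑ δ' ∈ A, (co δ' δ : ℝ)) • δ := by
    rw [Finset.sum_congr rfl (fun δ' hδ' => hco δ' hδ')]
    rw [Finset.sum_comm]
    exact Finset.sum_congr rfl fun δ _ => (Finset.sum_smul).symm
  have hLHS : K • γ = ∑ δ ∈ D.Δ, (K * (co γ δ : ℝ)) • δ := by
    conv_lhs => rw [hco γ hγA]
    rw [Finset.smul_sum]
    exact Finset.sum_congr rfl fun δ _ => (smul_smul _ _ _)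
  have hzero : ∑ δ ∈ D.Δ, (K * (co γ δ : ℝ) - 2 * ∑ δ' ∈ A, (co δ' δ : ℝ)) • δ = 0 := by
    have : ∑ δ ∈ D.Δ, (K * (co γ δ : ℝ) - 2 * ∑ δ' ∈ A, (co δ' δ : ℝ)) • δ
        = (∑ δ ∈ D.Δ, (K * (co γ δ : ℝ)) • δ)
          - ∑ δ ∈ D.Δ, (2 * ∑ δ' ∈ A, (co δ' δ : ℝ)) • δ := by
      rw [← Finset.sum_sub_distrib]
      exact Finset.sum_congr rfl fun δ _ => sub_smul _ _ _
    rw [this, ← hLHS, hKγ, hRHS, Finset.smul_sum, sub_eq_zero]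
    exact Finset.sum_congr rfl fun δ _ => by rw [smul_smul]
  have hcoef := D.indep_apply _ hzero
  -- pick a coordinate where γ has a nonzero coefficient
  have hex : ∃ δ₀ ∈ D.Δ, co γ δ₀ ≠ 0 := by
    by_contra hno
    push_neg at hno
    have : γ = 0 := by
      rw [hco γ hγA]
      apply Finset.sum_eq_zero
      intro δ hδ
      rw [hno δ hδ]
      simp
    exact D.root_ne_zero γ hγR this
  obtain ⟨δ₀, hδ₀, hn0⟩ := hex
  have h1 : (1:ℝ) ≤ (co γ δ₀ : ℝ) := by
    have : 1 ≤ co γ δ₀ := Nat.one_le_iff_ne_zero.mpr hn0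
    exact_mod_cast this
  have hge : (co γ δ₀ : ℝ) ≤ ∑ δ' ∈ A, (co δ' δ₀ : ℝ) :=
    Finset.single_le_sum (f := fun δ' => (co δ' δ₀ : ℝ)) (fun δ' _ => Nat.cast_nonneg _) hγA
  have heq := hcoef δ₀ hδ₀
  have : K * (co γ δ₀ : ℝ) = 2 * ∑ δ' ∈ A, (co δ' δ₀ : ℝ) := by linarith
  nlinarith

end RootSystemData
namespace RootSystemData

variable {V V' : Type} [AddCommGroup V] [Module ℝ V] [FiniteDimensional ℝ V]
  [AddCommGroup V'] [Module ℝ V'] [FiniteDimensional ℝ V']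
  (D : RootSystemData V V')

lemma Lf_rep {s : Multiset V'} (hs : D.IsPosRep s) : 2 * (s.card : ℝ) ≤ D.Lf s.sum := by
  induction s using Multiset.induction with
  | empty => simp
  | cons v t ih =>
    obtain ⟨γ, hγ, rfl⟩ := hs v (Multiset.mem_cons_self v t)
    have ht : D.IsPosRep t := fun w hw => hs w (Multiset.mem_cons_of_mem hw)
    have h1 := D.Lf_coroot_ge_two hγ
    have h2 := ih ht
    rw [Multiset.sum_cons, map_add, Multiset.card_cons]
    push_cast
    linarith

lemma Lf_nonneg_Qpos {x : V'} (hx : x ∈ D.Qpos) : 0 ≤ D.Lf x := by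
  obtain ⟨s, hs, rfl⟩ := D.Qpos_rep hx
  have := D.Lf_rep hs
  have : (0:ℝ) ≤ 2 * (s.card : ℝ) := by positivity
  linarith [D.Lf_rep hs]

lemma Bf_msum_left (s : Multiset V') (y : V') :
    D.Bf s.sum y = (s.map (fun v => D.Bf v y)).sum := by
  induction s using Multiset.induction with
  | empty => simp
  | cons v t ih =>
    rw [Multiset.sum_cons, map_add, Multiset.map_cons, Multiset.sum_cons, ← ih]
    rfl

lemma Bf_msum_right (x : V') (s : Multiset V') :
    D.Bf x s.sum = (s.map (fun v => D.Bf x v)).sum := by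
  rw [D.Bf_comm, D.Bf_msum_left]
  congr 1
  exact Multiset.map_congr rfl fun v _ => D.Bf_comm v x

lemma msum_nonpos {α : Type} (f : α → ℝ) :
    ∀ s : Multiset α, (∀ v ∈ s, f v ≤ 0) → (s.map f).sum ≤ 0 := by
  intro s
  induction s using Multiset.induction with
  | empty => intro _; simp
  | cons v t ih =>
    intro h
    rw [Multiset.map_cons, Multiset.sum_cons]
    have h1 := h v (Multiset.mem_cons_self v t)
    have h2 := ih (fun w hw => h w (Multiset.mem_cons_of_mem hw))
    linarith

lemma msum_exists_pos {α : Type} {s : Multiset α} {f : α → ℝ} (h : 0 < (s.map f).sum) :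
    ∃ v ∈ s, 0 < f v := by
  by_contra hno
  push_neg at hno
  have := msum_nonpos f s hno
  linarith

lemma int_pos_ge_one {r : ℝ} (h : ∃ n : ℤ, r = (n : ℝ)) (hr : 0 < r) : 1 ≤ r := by
  obtain ⟨n, rfl⟩ := h
  have : (0:ℤ) < n := by exact_mod_cast hr
  have : (1:ℤ) ≤ n := this
  exact_mod_cast this

lemma exists_pos_pair_of_Lf {x : V'} (h : 2 ≤ D.Lf x) : ∃ β ∈ D.Rpos, 0 < D.pair β x := by
  by_contra hno
  push_neg at hno
  have : D.Lf x ≤ 0 := by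
    rw [Lf_apply]
    exact Finset.sum_nonpos fun β hβ => hno β hβ
  linarith

lemma Bf_self_pos_of_pair {x : V'} {β : V} (hβ : β ∈ D.R) (h : D.pair β x ≠ 0) :
    0 < D.Bf x x := by
  have hpos : 0 < D.pair β x * D.pair β x := mul_self_pos.mpr h
  have hle : D.pair β x * D.pair β x ≤ ∑ b ∈ D.R, D.pair b x * D.pair b x :=
    Finset.single_le_sum (f := fun b => D.pair b x * D.pair b x)
      (fun b _ => mul_self_nonneg _) hβ
  rw [Bf_apply]
  linarith

end RootSystemData
namespace RootSystemData

variable {V V' : Type} [AddCommGroup V] [Module ℝ V] [FiniteDimensional ℝ V]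
  [AddCommGroup V'] [Module ℝ V'] [FiniteDimensional ℝ V']
  (D : RootSystemData V V')

/-- Key lemma: a minuscule element cannot exceed a dominant element of the lattice by a
nonzero sum of positive coroots. -/
lemma S_lemma (k : ℕ) : ∀ s : Multiset V', D.IsPosRep s → ∀ μ' ν : V', μ' ∈ D.X → ν ∈ D.X →
    D.Mn μ' → D.Dominant ν → μ' - ν = s.sum → s.card ≤ k → s = 0 := by
  induction k with
  | zero =>
    intro s _ μ' ν _ _ _ _ _ hcard
    exact Multiset.card_eq_zero.mp (Nat.le_zero.mp hcard)
  | succ k ih =>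
    intro s hs μ' ν hμX hνX hmn hdom hsum hcard
    by_cases h0 : s = 0
    · exact h0
    exfalso
    have hcards : 0 < s.card := Multiset.card_pos.mpr h0
    have hLf : 2 ≤ D.Lf s.sum := by
      have h1 := D.Lf_rep hs
      have h2 : (1:ℝ) ≤ (s.card : ℝ) := by exact_mod_cast hcards
      linarith
    obtain ⟨β, hβ, hβpos⟩ := D.exists_pos_pair_of_Lf hLf
    have hBxx : 0 < D.Bf s.sum s.sum :=
      D.Bf_self_pos_of_pair (D.Rpos_subset_R hβ) (ne_of_gt hβpos)
    rw [D.Bf_msum_left s s.sum] at hBxx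
    obtain ⟨v, hv, hBvx⟩ := msum_exists_pos hBxx
    obtain ⟨γ, hγ, rfl⟩ := hs v hv
    have hγR : γ ∈ D.R := D.Rpos_subset_R hγ
    have htrans := D.Bf_transport hγR s.sum
    have hBxv : 0 < D.Bf s.sum (D.coroot γ) := by rw [D.Bf_comm]; exact hBvx
    have hBvv : 0 ≤ D.Bf (D.coroot γ) (D.coroot γ) := D.Bf_self_nonneg _
    have hpair_pos : 0 < D.pair γ s.sum := by nlinarith
    have hxX : s.sum ∈ D.X := hsum ▸ sub_mem hμX hνX
    have h1le : (1:ℝ) ≤ D.pair γ s.sum :=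
      int_pos_ge_one (D.pair_X_int γ hγR _ hxX) hpair_pos
    have hsplit : D.pair γ μ' - D.pair γ ν = D.pair γ s.sum := by
      rw [← map_sub, hsum]
    have hμ1 : D.pair γ μ' ≤ 1 := (abs_le.mp (hmn γ hγR)).2
    have hν0 : 0 ≤ D.pair γ ν := hdom γ hγ
    have hμ'1 : D.pair γ μ' = 1 := by linarith
    have hν0' : D.pair γ ν = 0 := by linarith
    have hμ''w : (D.genW γ hγR).2 μ' = μ' - D.coroot γ := by
      show D.reflV' γ hγR μ' = _
      rw [reflV'_apply, hμ'1, one_smul]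
    have hmn'' : D.Mn (μ' - D.coroot γ) := by
      rw [← hμ''w]; exact D.Mn_weyl (D.genW_mem γ hγR) hmn
    have hμ''X : μ' - D.coroot γ ∈ D.X := sub_mem hμX (D.coroot_mem_X γ hγR)
    have hconss : s = (D.coroot γ) ::ₘ s.erase (D.coroot γ) := (Multiset.cons_erase hv).symm
    have hss : s.sum = D.coroot γ + (s.erase (D.coroot γ)).sum := by
      conv_lhs => rw [hconss]
      rw [Multiset.sum_cons]
    have hs'rep : D.IsPosRep (s.erase (D.coroot γ)) :=
      fun w hw => hs w (Multiset.mem_of_mem_erase hw)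
    have hsum' : (μ' - D.coroot γ) - ν = (s.erase (D.coroot γ)).sum := by
      have : μ' - ν = D.coroot γ + (s.erase (D.coroot γ)).sum := by rw [hsum, hss]
      rw [sub_right_comm, this]
      abel
    by_cases h0' : s.erase (D.coroot γ) = 0
    · have hμν : μ' - D.coroot γ = ν := by
        rw [h0'] at hsum'
        simpa [sub_eq_zero] using hsum'
      have hc : D.pair γ ν = D.pair γ μ' - D.pair γ (D.coroot γ) := by
        rw [← hμν]; exact map_sub _ _ _
      rw [D.pair_self_eq_two γ hγR, hμ'1, hν0'] at hc
      norm_num at hc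
    · have hcard' : (s.erase (D.coroot γ)).card ≤ k := by
        have hce := Multiset.card_erase_of_mem hv
        rw [hce, Nat.pred_eq_sub_one]
        have h1 : s.card ≤ k + 1 := hcard
        have h2 : 0 < s.card := hcards
        omega
      exact h0' (ih _ hs'rep _ ν hμ''X hνX hmn'' hdom hsum' hcard')

end RootSystemData
namespace RootSystemData

variable {V V' : Type} [AddCommGroup V] [Module ℝ V] [FiniteDimensional ℝ V]
  [AddCommGroup V'] [Module ℝ V'] [FiniteDimensional ℝ V']
  (D : RootSystemData V V')

lemma not_dominant_step {ν : V'} (hν : ν ∈ D.X) (hnd : ¬ D.Dominant ν) :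
    ∃ α, ∃ hαp : α ∈ D.Rpos, ∃ hαR : α ∈ D.R,
      (D.genW α hαR).2 ν - ν ∈ D.Qpos ∧ D.Lf ν + 2 ≤ D.Lf ((D.genW α hαR).2 ν) := by
  rw [Dominant] at hnd
  push_neg at hnd
  obtain ⟨α, hαp, hαneg⟩ := hnd
  have hαR : α ∈ D.R := D.Rpos_subset_R hαp
  obtain ⟨n, hn⟩ := D.pair_X_int α hαR ν hν
  have hnneg : n < 0 := by
    have : (n : ℝ) < 0 := hn ▸ hαneg
    exact_mod_cast this
  have hle : D.pair α ν ≤ -1 := by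
    rw [hn]
    have : n ≤ -1 := by omega
    exact_mod_cast this
  have hν'eq : (D.genW α hαR).2 ν = ν - D.pair α ν • D.coroot α := D.reflV'_apply α hαR ν
  have hLcor := D.Lf_coroot_ge_two hαp
  refine ⟨α, hαp, hαR, ?_, ?_⟩
  · rw [hν'eq]
    have heq : ν - D.pair α ν • D.coroot α - ν = (-(D.pair α ν)) • D.coroot α := by
      rw [neg_smul]; abel
    rw [heq, hn, ← Int.cast_neg, ← Int.toNat_of_nonneg (by omega : (0:ℤ) ≤ -n)]
    rw [Int.cast_natCast, Nat.cast_smul_eq_nsmul]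
    exact AddSubmonoid.nsmul_mem _ (D.coroot_mem_Qpos α hαp) _
  · rw [hν'eq, map_sub, map_smul, smul_eq_mul]
    nlinarith

lemma descent (C : ℝ) (k : ℕ) : ∀ ν ∈ D.X, (∀ g ∈ D.weyl, D.Lf (g.2 ν) ≤ C) →
    C - D.Lf ν ≤ (k : ℝ) →
    ∃ g ∈ D.weyl, D.Dominant (g.2 ν) ∧ g.2 ν - ν ∈ D.Qpos := by
  induction k with
  | zero =>
    intro ν hν hbnd hgap
    by_cases hd : D.Dominant ν
    · refine ⟨1, one_mem _, hd, ?_⟩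
      have : (1 : (V ≃ₗ[ℝ] V) × (V' ≃ₗ[ℝ] V')).2 ν = ν := rfl
      rw [this, sub_self]
      exact zero_mem _
    · exfalso
      obtain ⟨α, hαp, hαR, _, hstep⟩ := D.not_dominant_step hν hd
      have hb := hbnd _ (D.genW_mem α hαR)
      simp only [Nat.cast_zero] at hgap
      linarith
  | succ k ih =>
    intro ν hν hbnd hgap
    by_cases hd : D.Dominant ν
    · refine ⟨1, one_mem _, hd, ?_⟩
      have : (1 : (V ≃ₗ[ℝ] V) × (V' ≃ₗ[ℝ] V')).2 ν = ν := rfl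
      rw [this, sub_self]
      exact zero_mem _
    · obtain ⟨α, hαp, hαR, hmem, hstep⟩ := D.not_dominant_step hν hd
      have hb := hbnd _ (D.genW_mem α hαR)
      have hν'X : (D.genW α hαR).2 ν ∈ D.X := D.wX (D.genW_mem α hαR) hν
      have hbnd' : ∀ g ∈ D.weyl, D.Lf (g.2 ((D.genW α hαR).2 ν)) ≤ C := by
        intro g hg
        have : g.2 ((D.genW α hαR).2 ν) = (g * D.genW α hαR).2 ν := rfl
        rw [this]
        exact hbnd _ (mul_mem hg (D.genW_mem α hαR))
      have hgap' : C - D.Lf ((D.genW α hαR).2 ν) ≤ (k : ℝ) := by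
        push_cast at hgap
        linarith
      obtain ⟨g', hg', hdom', htrk'⟩ := ih _ hν'X hbnd' hgap'
      refine ⟨g' * D.genW α hαR, mul_mem hg' (D.genW_mem α hαR), hdom', ?_⟩
      have heq : (g' * D.genW α hαR).2 ν - ν
          = (g'.2 ((D.genW α hαR).2 ν) - (D.genW α hαR).2 ν) + ((D.genW α hαR).2 ν - ν) := by
        show g'.2 ((D.genW α hαR).2 ν) - ν = _
        abel
      rw [heq]
      exact add_mem htrk' hmem

end RootSystemData
namespace RootSystemData

variable {V V' : Type} [AddCommGroup V] [Module ℝ V] [FiniteDimensional ℝ V]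
  [AddCommGroup V'] [Module ℝ V'] [FiniteDimensional ℝ V']
  (D : RootSystemData V V')

lemma msum_nonneg {α : Type} (f : α → ℝ) :
    ∀ s : Multiset α, (∀ v ∈ s, 0 ≤ f v) → 0 ≤ (s.map f).sum := by
  intro s
  induction s using Multiset.induction with
  | empty => intro _; simp
  | cons v t ih =>
    intro h
    rw [Multiset.map_cons, Multiset.sum_cons]
    have h1 := h v (Multiset.mem_cons_self v t)
    have h2 := ih (fun w hw => h w (Multiset.mem_cons_of_mem hw))
    linarith

lemma Lf_le_card {x : V'} (hmn : D.Mn x) : D.Lf x ≤ (D.Rpos.card : ℝ) := by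
  rw [Lf_apply]
  calc ∑ β ∈ D.Rpos, D.pair β x ≤ ∑ _β ∈ D.Rpos, (1:ℝ) :=
        Finset.sum_le_sum fun β hβ => (abs_le.mp (hmn β (D.Rpos_subset_R hβ))).2
    _ = (D.Rpos.card : ℝ) := by simp

lemma Lf_ge_neg_card {x : V'} (hmn : D.Mn x) : -(D.Rpos.card : ℝ) ≤ D.Lf x := by
  rw [Lf_apply]
  calc -(D.Rpos.card : ℝ) = ∑ _β ∈ D.Rpos, (-1:ℝ) := by simp
    _ ≤ ∑ β ∈ D.Rpos, D.pair β x :=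
        Finset.sum_le_sum fun β hβ => (abs_le.mp (hmn β (D.Rpos_subset_R hβ))).1

lemma arith_ab {a b P1 P2 Q : ℝ} (h1 : Q = b * P1 / 2) (h2 : Q = a * P2 / 2)
    (hCS : Q ^ 2 ≤ P1 * P2) (hP1 : 0 < P1) (hP2 : 0 < P2) (ha : 2 ≤ a) (hb : 2 ≤ b) :
    a = 2 ∧ b = 2 ∧ P1 = P2 ∧ Q = P1 := by
  have hQQ : Q ^ 2 = (a * b / 4) * (P1 * P2) := by
    calc Q ^ 2 = (b * P1 / 2) * (a * P2 / 2) := by rw [pow_two]; nth_rewrite 1 [h1]; rw [h2]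
      _ = (a * b / 4) * (P1 * P2) := by ring
  have hPP : 0 < P1 * P2 := mul_pos hP1 hP2
  have hab : a * b ≤ 4 := by nlinarith
  have ha' : a ≤ 2 := by nlinarith
  have hb' : b ≤ 2 := by nlinarith
  have haeq : a = 2 := le_antisymm ha' ha
  have hbeq : b = 2 := le_antisymm hb' hb
  rw [haeq] at h2
  rw [hbeq] at h1
  exact ⟨haeq, hbeq, by linarith, by linarith⟩

lemma z_lemma_aux (k : ℕ) : ∀ s t : Multiset V', D.IsPosRep s → D.IsPosRep t →
    ∀ z : V', z ∈ D.X → D.Mn z → D.Dominant z →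
    z = s.sum - t.sum → s.card + t.card ≤ k → z = 0 := by
  induction k with
  | zero =>
    intro s t _ _ z _ _ _ hzeq hcard
    have hs0 : s = 0 := Multiset.card_eq_zero.mp (by omega)
    have ht0 : t = 0 := Multiset.card_eq_zero.mp (by omega)
    rw [hs0, ht0] at hzeq
    simpa using hzeq
  | succ k ih =>
    intro s t hs ht z hzX hmn hdom hzeq hcard
    by_cases ht0 : t = 0
    · -- no negative part : use the key S-lemma
      have hzs : z = s.sum := by rw [ht0] at hzeq; simpa using hzeq
      have hdom0 : D.Dominant (0 : V') := by intro α _; simp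
      have hs0 : s = 0 := by
        refine D.S_lemma s.card s hs z 0 hzX (zero_mem _) hmn hdom0 ?_ le_rfl
        rw [sub_zero, hzs]
      rw [hs0] at hzs; simpa using hzs
    · -- there is a negative part
      have htc : 0 < t.card := Multiset.card_pos.mpr ht0
      have hLt : 2 ≤ D.Lf t.sum := by
        have h1 := D.Lf_rep ht
        have h2 : (1:ℝ) ≤ (t.card : ℝ) := by exact_mod_cast htc
        linarith
      obtain ⟨β, hβ, hβpos⟩ := D.exists_pos_pair_of_Lf hLt
      have hBtt : 0 < D.Bf t.sum t.sum :=
        D.Bf_self_pos_of_pair (D.Rpos_subset_R hβ) (ne_of_gt hβpos)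
      have hBzt : 0 ≤ D.Bf z t.sum := by
        rw [D.Bf_msum_right]
        apply msum_nonneg
        intro v hv
        obtain ⟨δ, hδ, rfl⟩ := ht v hv
        have hδR : δ ∈ D.R := D.Rpos_subset_R hδ
        have htr := D.Bf_transport hδR z
        have h1 : 0 ≤ D.pair δ z := hdom δ hδ
        have h2 : 0 ≤ D.Bf (D.coroot δ) (D.coroot δ) := D.Bf_self_nonneg _
        nlinarith
      have hBst : 0 < D.Bf s.sum t.sum := by
        have hsum_eq : s.sum = z + t.sum := by rw [hzeq]; abel
        have : D.Bf s.sum t.sum = D.Bf z t.sum + D.Bf t.sum t.sum := by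
          rw [hsum_eq, map_add]; rfl
        linarith
      rw [D.Bf_msum_left] at hBst
      obtain ⟨vγ, hvγ, hBvt⟩ := msum_exists_pos hBst
      rw [D.Bf_msum_right] at hBvt
      obtain ⟨vδ, hvδ, hBgd⟩ := msum_exists_pos hBvt
      obtain ⟨γ, hγ, rfl⟩ := hs vγ hvγ
      obtain ⟨δ, hδ, rfl⟩ := ht vδ hvδ
      have hγR : γ ∈ D.R := D.Rpos_subset_R hγ
      have hδR : δ ∈ D.R := D.Rpos_subset_R hδ
      -- transport identities
      have h1 := D.Bf_transport hγR (D.coroot δ)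
      have h2 := D.Bf_transport hδR (D.coroot γ)
      have hco : D.Bf (D.coroot δ) (D.coroot γ) = D.Bf (D.coroot γ) (D.coroot δ) :=
        D.Bf_comm _ _
      have hBγγ0 : 0 ≤ D.Bf (D.coroot γ) (D.coroot γ) := D.Bf_self_nonneg _
      have hBδδ0 : 0 ≤ D.Bf (D.coroot δ) (D.coroot δ) := D.Bf_self_nonneg _
      have hb_pos : 0 < D.pair γ (D.coroot δ) := by nlinarith
      have ha_pos : 0 < D.pair δ (D.coroot γ) := by nlinarith
      have hBγγpos : 0 < D.Bf (D.coroot γ) (D.coroot γ) := by nlinarith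
      have hBδδpos : 0 < D.Bf (D.coroot δ) (D.coroot δ) := by nlinarith
      obtain ⟨na, hna⟩ := D.pair_X_int δ hδR (D.coroot γ) (D.coroot_mem_X γ hγR)
      obtain ⟨nb, hnb⟩ := D.pair_X_int γ hγR (D.coroot δ) (D.coroot_mem_X δ hδR)
      -- bookkeeping about sums and cards
      have hconss : s = (D.coroot γ) ::ₘ s.erase (D.coroot γ) := (Multiset.cons_erase hvγ).symm
      have hconst : t = (D.coroot δ) ::ₘ t.erase (D.coroot δ) := (Multiset.cons_erase hvδ).symm
      have hserase : (s.erase (D.coroot γ)).sum = s.sum - D.coroot γ := by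
        have h := congrArg Multiset.sum hconss
        rw [Multiset.sum_cons] at h
        rw [h]; abel
      have hterase : (t.erase (D.coroot δ)).sum = t.sum - D.coroot δ := by
        have h := congrArg Multiset.sum hconst
        rw [Multiset.sum_cons] at h
        rw [h]; abel
      have hsrep' : D.IsPosRep (s.erase (D.coroot γ)) :=
        fun w hw => hs w (Multiset.mem_of_mem_erase hw)
      have htrep' : D.IsPosRep (t.erase (D.coroot δ)) :=
        fun w hw => ht w (Multiset.mem_of_mem_erase hw)
      have hsc : 0 < s.card := Multiset.card_pos_iff_exists_mem.mpr ⟨_, hvγ⟩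
      have hcard_se : (s.erase (D.coroot γ)).card = s.card - 1 := by
        rw [Multiset.card_erase_of_mem hvγ, Nat.pred_eq_sub_one]
      have hcard_te : (t.erase (D.coroot δ)).card = t.card - 1 := by
        rw [Multiset.card_erase_of_mem hvδ, Nat.pred_eq_sub_one]
      by_cases hA : D.pair δ (D.coroot γ) = 1
      · -- γ∨ - δ∨ is a coroot
        have hF : D.coroot γ - D.coroot δ ∈ D.coroot '' (D.R : Set V) := by
          have := D.reflect_coroot_mem δ hδR γ hγR
          rwa [hA, one_smul] at this
        obtain ⟨ε, hεR', hcε⟩ := hF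
        have hεR : ε ∈ D.R := hεR'
        rcases D.R_dichot hεR with hp | hp
        · refine ih (D.coroot ε ::ₘ s.erase (D.coroot γ)) (t.erase (D.coroot δ)) ?_ htrep'
            z hzX hmn hdom ?_ ?_
          · intro w hw
            rcases Multiset.mem_cons.mp hw with h | h
            · exact ⟨ε, hp, h.symm⟩
            · exact hsrep' w h
          · rw [Multiset.sum_cons, hserase, hterase, hcε, hzeq]; abel
          · rw [Multiset.card_cons, hcard_se, hcard_te]; omega
        · have hcε' : D.coroot (-ε) = D.coroot δ - D.coroot γ := by
            rw [D.coroot_neg ε hεR, hcε]; abel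
          refine ih (s.erase (D.coroot γ)) (D.coroot (-ε) ::ₘ t.erase (D.coroot δ)) hsrep' ?_
            z hzX hmn hdom ?_ ?_
          · intro w hw
            rcases Multiset.mem_cons.mp hw with h | h
            · exact ⟨-ε, hp, h.symm⟩
            · exact htrep' w h
          · rw [Multiset.sum_cons, hserase, hterase, hcε', hzeq]; abel
          · rw [Multiset.card_cons, hcard_se, hcard_te]; omega
      · by_cases hB : D.pair γ (D.coroot δ) = 1
        · have hF : D.coroot δ - D.coroot γ ∈ D.coroot '' (D.R : Set V) := by
            have := D.reflect_coroot_mem γ hγR δ hδR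
            rwa [hB, one_smul] at this
          obtain ⟨ε, hεR', hcε⟩ := hF
          have hεR : ε ∈ D.R := hεR'
          rcases D.R_dichot hεR with hp | hp
          · refine ih (s.erase (D.coroot γ)) (D.coroot ε ::ₘ t.erase (D.coroot δ)) hsrep' ?_
              z hzX hmn hdom ?_ ?_
            · intro w hw
              rcases Multiset.mem_cons.mp hw with h | h
              · exact ⟨ε, hp, h.symm⟩
              · exact htrep' w h
            · rw [Multiset.sum_cons, hserase, hterase, hcε, hzeq]; abel
            · rw [Multiset.card_cons, hcard_se, hcard_te]; omega
          · have hcε' : D.coroot (-ε) = D.coroot γ - D.coroot δ := by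
              rw [D.coroot_neg ε hεR, hcε]; abel
            refine ih (D.coroot (-ε) ::ₘ s.erase (D.coroot γ)) (t.erase (D.coroot δ)) ?_ htrep'
              z hzX hmn hdom ?_ ?_
            · intro w hw
              rcases Multiset.mem_cons.mp hw with h | h
              · exact ⟨-ε, hp, h.symm⟩
              · exact hsrep' w h
            · rw [Multiset.sum_cons, hserase, hterase, hcε', hzeq]; abel
            · rw [Multiset.card_cons, hcard_se, hcard_te]; omega
        · -- both pairings are ≥ 2 : forces equal coroots
          have hage : (1:ℝ) ≤ D.pair δ (D.coroot γ) := int_pos_ge_one ⟨na, hna⟩ ha_pos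
          have hbge : (1:ℝ) ≤ D.pair γ (D.coroot δ) := int_pos_ge_one ⟨nb, hnb⟩ hb_pos
          have hna2 : 2 ≤ na := by
            have h1' : (1:ℝ) ≤ (na:ℝ) := hna ▸ hage
            have h2' : (na:ℝ) ≠ 1 := fun hh => hA (by rw [hna, hh])
            have : 1 ≤ na := by exact_mod_cast h1'
            have : na ≠ 1 := fun hh => h2' (by rw [hh]; norm_num)
            omega
          have hnb2 : 2 ≤ nb := by
            have h1' : (1:ℝ) ≤ (nb:ℝ) := hnb ▸ hbge
            have h2' : (nb:ℝ) ≠ 1 := fun hh => hB (by rw [hnb, hh])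
            have : 1 ≤ nb := by exact_mod_cast h1'
            have : nb ≠ 1 := fun hh => h2' (by rw [hh]; norm_num)
            omega
          have ha2 : (2:ℝ) ≤ D.pair δ (D.coroot γ) := by
            rw [hna]; exact_mod_cast hna2
          have hb2 : (2:ℝ) ≤ D.pair γ (D.coroot δ) := by
            rw [hnb]; exact_mod_cast hnb2
          have hCS := D.Bf_CS (D.coroot γ) (D.coroot δ)
          have hBγδ1 : D.Bf (D.coroot γ) (D.coroot δ)
              = D.pair γ (D.coroot δ) * D.Bf (D.coroot γ) (D.coroot γ) / 2 := by
            rw [← hco]; linarith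
          have hBγδ2 : D.Bf (D.coroot γ) (D.coroot δ)
              = D.pair δ (D.coroot γ) * D.Bf (D.coroot δ) (D.coroot δ) / 2 := by
            linarith
          obtain ⟨ha_eq, hb_eq, hBeq, hBgd_eq⟩ :=
            arith_ab hBγδ1 hBγδ2 hCS hBγγpos hBδδpos ha2 hb2
          -- n := coroot γ - coroot δ pairs to zero with every root
          have hBnn : D.Bf (D.coroot γ - D.coroot δ) (D.coroot γ - D.coroot δ) = 0 := by
            have e1 : D.Bf (D.coroot γ - D.coroot δ) (D.coroot γ - D.coroot δ)
                = D.Bf (D.coroot γ) (D.coroot γ) - D.Bf (D.coroot γ) (D.coroot δ)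
                  - D.Bf (D.coroot δ) (D.coroot γ)
                  + D.Bf (D.coroot δ) (D.coroot δ) := by
              rw [map_sub]
              simp only [LinearMap.sub_apply, map_sub]
              ring
            rw [e1, hco, hBgd_eq, hBeq]
            ring
          have hpair0 : ∀ β ∈ D.R, D.pair β (D.coroot γ - D.coroot δ) = 0 := by
            intro β hβ'
            have hsum0 : ∑ b ∈ D.R, D.pair b (D.coroot γ - D.coroot δ)
                * D.pair b (D.coroot γ - D.coroot δ) = 0 := by
              rw [← Bf_apply]; exact hBnn
            have := (Finset.sum_eq_zero_iff_of_nonneg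
              (fun b _ => mul_self_nonneg (D.pair b (D.coroot γ - D.coroot δ)))).mp hsum0 β hβ'
            exact mul_self_eq_zero.mp this
          by_cases hn0 : D.coroot γ - D.coroot δ = 0
          · -- equal coroots : cancel one from each side
            have hceq : D.coroot γ = D.coroot δ := sub_eq_zero.mp hn0
            refine ih (s.erase (D.coroot γ)) (t.erase (D.coroot δ)) hsrep' htrep'
              z hzX hmn hdom ?_ ?_
            · rw [hserase, hterase, hzeq, hceq]; abel
            · rw [hcard_se, hcard_te]; omega
          · exfalso
            -- an infinite family inside the finite set of coroots
            set n : V' := D.coroot γ - D.coroot δ with hn_def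
            set w : (V ≃ₗ[ℝ] V) × (V' ≃ₗ[ℝ] V') := D.genW γ hγR * D.genW δ hδR with hw_def
            have hwW : w ∈ D.weyl := mul_mem (D.genW_mem γ hγR) (D.genW_mem δ hδR)
            have hinner : D.reflV' δ hδR (D.coroot γ)
                = D.coroot γ - (2:ℝ) • D.coroot δ := by
              rw [reflV'_apply, ha_eq]
            have hw2 : w.2 (D.coroot γ) = D.coroot γ + (2:ℝ) • n := by
              show D.reflV' γ hγR (D.reflV' δ hδR (D.coroot γ)) = _
              rw [hinner, reflV'_apply, map_sub, map_smul, D.pair_self_eq_two γ hγR, hb_eq,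
                smul_eq_mul, hn_def]
              module
            have hinner2 : D.reflV' δ hδR n = n := by
              rw [reflV'_apply, hpair0 δ hδR, zero_smul, sub_zero]
            have hwn : w.2 n = n := by
              show D.reflV' γ hγR (D.reflV' δ hδR n) = _
              rw [hinner2, reflV'_apply, hpair0 γ hγR, zero_smul, sub_zero]
            have hiter : ∀ m : ℕ, ((w ^ m).2) (D.coroot γ) = D.coroot γ + (2*(m:ℝ)) • n := by
              intro m
              induction m with
              | zero => simp
              | succ m ihm =>
                have hps : w ^ (m+1) = w * w ^ m := by rw [pow_succ']
                rw [hps]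
                have : (w * w ^ m).2 (D.coroot γ) = w.2 ((w ^ m).2 (D.coroot γ)) := rfl
                rw [this, ihm, map_add, map_smul, hw2, hwn]
                push_cast
                rw [show (2*((m:ℝ)+1)) = 2*(m:ℝ) + 2 by ring, add_smul]
                abel
            have hmemF : ∀ m : ℕ, D.coroot γ + (2*(m:ℝ)) • n ∈ D.coroot '' (D.R : Set V) := by
              intro m
              have := D.wF (pow_mem hwW m) (⟨γ, hγR, rfl⟩ :
                D.coroot γ ∈ D.coroot '' (D.R : Set V))
              rwa [hiter m] at this
            have hinj : Function.Injective (fun m : ℕ => D.coroot γ + (2*(m:ℝ)) • n) := by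
              intro m m' hmm
              have h1 : (2*(m:ℝ)) • n = (2*(m':ℝ)) • n := by
                have := hmm
                simpa using this
              have h2 : (2*(m:ℝ)) = (2*(m':ℝ)) := smul_left_injective ℝ hn0 h1
              have : (m:ℝ) = (m':ℝ) := by linarith
              exact_mod_cast this
            have hfin : (D.coroot '' (D.R : Set V)).Finite :=
              Set.Finite.image _ (D.R.finite_toSet)
            have hrange : Set.range (fun m : ℕ => D.coroot γ + (2*(m:ℝ)) • n)
                ⊆ D.coroot '' (D.R : Set V) := by
              rintro v ⟨m, rfl⟩
              exact hmemF m
            exact (Set.infinite_range_of_injective hinj) (hfin.subset hrange)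

/-- An element of the coroot lattice with all root pairings in `[-1,1]` vanishes. -/
lemma z_lemma {z : V'} (hzQc : z ∈ D.Qc) (hmn : D.Mn z) : z = 0 := by
  have hzX : z ∈ D.X := D.Qc_le_X hzQc
  have hbnd : ∀ g ∈ D.weyl, D.Lf (g.2 z) ≤ (D.Rpos.card : ℝ) := by
    intro g hg
    exact D.Lf_le_card (D.Mn_weyl hg hmn)
  have hgap : (D.Rpos.card : ℝ) - D.Lf z ≤ ((2 * D.Rpos.card : ℕ) : ℝ) := by
    have := D.Lf_ge_neg_card hmn
    push_cast
    linarith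
  obtain ⟨w, hw, hdomw, _⟩ := D.descent (D.Rpos.card : ℝ) (2 * D.Rpos.card) z hzX hbnd hgap
  have hz'Qc : w.2 z ∈ D.Qc := by
    have h1 : w.2 z - z ∈ D.Qc := D.wQc hw hzX
    have : w.2 z = (w.2 z - z) + z := by abel
    rw [this]
    exact add_mem h1 hzQc
  obtain ⟨s, t, hs, ht, heq⟩ := D.Qc_rep hz'Qc
  have hz'0 : w.2 z = 0 :=
    D.z_lemma_aux (s.card + t.card) s t hs ht (w.2 z) (D.wX hw hzX)
      (D.Mn_weyl hw hmn) hdomw heq le_rfl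
  have : z = w.2.symm (w.2 z) := (w.2.symm_apply_apply z).symm
  rw [hz'0] at this
  simpa using this

end RootSystemData
namespace RootSystemData

variable {V V' : Type} [AddCommGroup V] [Module ℝ V] [FiniteDimensional ℝ V]
  [AddCommGroup V'] [Module ℝ V'] [FiniteDimensional ℝ V']
  (D : RootSystemData V V')

/-- Every Weyl translate of a dominant minuscule element lies below it. -/
lemma lemA (μ : V') (hX : μ ∈ D.X) (hdom : D.Dominant μ) (hmn : D.Mn μ) :
    ∀ g ∈ D.weyl, μ - g.2 μ ∈ D.Qpos := by
  intro g hg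
  have hνX : g.2 μ ∈ D.X := D.wX hg hX
  have hνmn : D.Mn (g.2 μ) := D.Mn_weyl hg hmn
  have hbnd : ∀ h ∈ D.weyl, D.Lf (h.2 (g.2 μ)) ≤ (D.Rpos.card : ℝ) := by
    intro h hh
    have heq : h.2 (g.2 μ) = (h * g).2 μ := rfl
    rw [heq]
    exact D.Lf_le_card (D.Mn_weyl (mul_mem hh hg) hmn)
  have hgap : (D.Rpos.card : ℝ) - D.Lf (g.2 μ) ≤ ((2 * D.Rpos.card : ℕ) : ℝ) := by
    have := D.Lf_ge_neg_card hνmn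
    push_cast
    linarith
  obtain ⟨w, hw, hdw, htrk⟩ :=
    D.descent (D.Rpos.card : ℝ) (2 * D.Rpos.card) (g.2 μ) hνX hbnd hgap
  have hdX : w.2 (g.2 μ) ∈ D.X := D.wX hw hνX
  have hdmn : D.Mn (w.2 (g.2 μ)) := D.Mn_weyl hw hνmn
  have hz1 : (w * g).2 μ - μ ∈ D.Qc := D.wQc (mul_mem hw hg) hX
  have hzQc : μ - w.2 (g.2 μ) ∈ D.Qc := by
    have heq : μ - w.2 (g.2 μ) = -((w * g).2 μ - μ) := by
      show _ = -(w.2 (g.2 μ) - μ)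
      abel
    rw [heq]
    exact NegMemClass.neg_mem hz1
  have hzmn : D.Mn (μ - w.2 (g.2 μ)) := by
    have habs : ∀ β' ∈ D.Rpos, |D.pair β' (μ - w.2 (g.2 μ))| ≤ 1 := by
      intro β' hβ'
      have hsplit : D.pair β' (μ - w.2 (g.2 μ))
          = D.pair β' μ - D.pair β' (w.2 (g.2 μ)) := map_sub _ _ _
      have hβ'R : β' ∈ D.R := D.Rpos_subset_R hβ'
      have d1 : 0 ≤ D.pair β' μ := hdom β' hβ'
      have d2 : D.pair β' μ ≤ 1 := (abs_le.mp (hmn β' hβ'R)).2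
      have d3 : 0 ≤ D.pair β' (w.2 (g.2 μ)) := hdw β' hβ'
      have d4 : D.pair β' (w.2 (g.2 μ)) ≤ 1 := (abs_le.mp (hdmn β' hβ'R)).2
      rw [abs_le]
      constructor <;> (rw [hsplit]; linarith)
    intro β hβ
    rcases D.R_dichot hβ with hp | hp
    · exact habs β hp
    · have h2 := habs (-β) hp
      have h3 : D.pair (-β) (μ - w.2 (g.2 μ)) = -(D.pair β (μ - w.2 (g.2 μ))) := by
        rw [map_neg]; rfl
      rw [h3, abs_neg] at h2
      exact h2
  have hz0 : μ - w.2 (g.2 μ) = 0 := D.z_lemma hzQc hzmn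
  have hμd : μ = w.2 (g.2 μ) := by
    have := sub_eq_zero.mp hz0
    exact this
  have heq : μ - g.2 μ = w.2 (g.2 μ) - g.2 μ := by rw [← hμd]
  rw [heq]
  exact htrk

end RootSystemData

theorem minuscule_minimal_and_orbit {V V' : Type} [AddCommGroup V] [Module ℝ V] [FiniteDimensional ℝ V]
    [AddCommGroup V'] [Module ℝ V'] [FiniteDimensional ℝ V']
    (D : RootSystemData V V')
    (μ : V') (hX : μ ∈ D.X) (hdom : D.Dominant μ) (hne : μ ≠ 0)
    (hmin : ∀ α ∈ D.R, D.pair α μ = -1 ∨ D.pair α μ = 0 ∨ D.pair α μ = 1) :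
    (¬ ∃ ν ∈ D.Xplus, D.leQ ν μ ∧ ν ≠ μ) ∧ D.Omega μ = D.Worbit μ := by
  have hMnμ : D.Mn μ := by
    intro β hβ
    rcases hmin β hβ with h | h | h <;> rw [h] <;> norm_num
  have part1 : ¬ ∃ ν ∈ D.Xplus, D.leQ ν μ ∧ ν ≠ μ := by
    rintro ⟨ν, ⟨hνX, hνdom⟩, hle, hneq⟩
    have hQ : μ - ν ∈ D.Qpos := hle
    obtain ⟨s, hs, hsum⟩ := D.Qpos_rep hQ
    have hs0 := D.S_lemma s.card s hs μ ν hX hνX hMnμ hνdom hsum.symm le_rfl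
    apply hneq
    rw [hs0] at hsum
    have : μ - ν = 0 := by simpa using hsum.symm
    exact (sub_eq_zero.mp this).symm
  refine ⟨part1, ?_⟩
  ext ν
  constructor
  · rintro ⟨hνX, hall⟩
    have hbnd : ∀ g ∈ D.weyl, D.Lf (g.2 ν) ≤ D.Lf μ := by
      intro g hg
      have hmem : μ - g.2 ν ∈ D.Qpos := hall g hg
      have h0 := D.Lf_nonneg_Qpos hmem
      have heq : D.Lf (μ - g.2 ν) = D.Lf μ - D.Lf (g.2 ν) := map_sub _ _ _
      linarith
    obtain ⟨k, hk⟩ := exists_nat_ge (D.Lf μ - D.Lf ν)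
    obtain ⟨w, hw, hdw, _⟩ := D.descent (D.Lf μ) k ν hνX hbnd hk
    have hdX : w.2 ν ∈ D.X := D.wX hw hνX
    have hdle : D.leQ (w.2 ν) μ := hall w hw
    have hdeq : w.2 ν = μ := by
      by_contra hneq
      exact part1 ⟨w.2 ν, ⟨hdX, hdw⟩, hdle, hneq⟩
    refine ⟨w⁻¹, inv_mem hw, ?_⟩
    show ν = (w⁻¹).2 μ
    rw [← hdeq]
    show ν = w.2.symm (w.2 ν)
    rw [LinearEquiv.symm_apply_apply]
  · rintro ⟨g, hg, rfl⟩
    refine ⟨D.wX hg hX, ?_⟩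
    intro h hh
    show μ - h.2 (g.2 μ) ∈ D.Qpos
    have heq : h.2 (g.2 μ) = (h * g).2 μ := rfl
    rw [heq]
    exact D.lemA μ hX hdom hMnμ (h * g) (mul_mem hh hg)

end
end
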